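/- arXiv:math/0212061 — 12 statements merged into one kernel-verified Lean document; each statement's English description precedes it below -/
import Mathlib

section
/- Let p be a prime, R a commutative ring, and φ : R → R a lift of Frobenius. Then for every a ∈ R and every integer m ≥ 1 there exist elements a_1, …, a_m ∈ R such that φ^m(a) = a^{p^m} + p·a_1^{p^{m−1}} + p²·a_2^{p^{m−2}} + ⋯ + p^m·a_m, where φ^m is the m-fold composite of φ and p denotes the image of the integer p in R. -/
/-- If `φ : R → R` is a lift of Frobenius (a ring endomorphism with
`φ(a) ≡ a^p mod p` for all `a`), then for every `a ∈ R` and `m ≥ 1` there are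
elements `a_1, …, a_m ∈ R` with
`φ^m(a) = a^{p^m} + p·a_1^{p^{m-1}} + p²·a_2^{p^{m-2}} + ⋯ + p^m·a_m`. -/
theorem stmt_1 (p : ℕ) (hp : p.Prime) (R : Type*) [CommRing R] (φ : R →+* R)
    (hφ : ∀ a : R, ∃ b : R, φ a = a ^ p + (p : R) * b)
    (a : R) (m : ℕ) (hm : 1 ≤ m) :
    ∃ c : ℕ → R,
      (⇑φ)^[m] a = a ^ (p ^ m) + ∑ i ∈ Finset.Icc 1 m, (p : R) ^ i * (c i) ^ (p ^ (m - i)) := by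
  induction m, hm using Nat.le_induction with
  | base =>
    obtain ⟨b, hb⟩ := hφ a
    exact ⟨fun _ => b, by simp [hb]⟩
  | succ m hm ih =>
    obtain ⟨c, hc⟩ := ih
    have key : ((p : R) ^ (m + 1)) ∣
        (⇑φ)^[m + 1] a -
          (a ^ p ^ (m + 1) + ∑ i ∈ Finset.Icc 1 m, (p : R) ^ i * (c i) ^ p ^ (m + 1 - i)) := by
      rw [Function.iterate_succ_apply', hc, map_add, map_pow, map_sum]
      have h1 : ((p : R) ^ (m + 1)) ∣ (φ a) ^ p ^ m - a ^ p ^ (m + 1) := by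
        obtain ⟨b, hb⟩ := hφ a
        have hd : (p : R) ∣ φ a - a ^ p := ⟨b, by rw [hb]; ring⟩
        have h := dvd_sub_pow_of_dvd_sub hd m
        rwa [← pow_mul, ← pow_succ'] at h
      have h2 : ((p : R) ^ (m + 1)) ∣
          ∑ i ∈ Finset.Icc 1 m,
            (φ ((p : R) ^ i * (c i) ^ p ^ (m - i)) - (p : R) ^ i * (c i) ^ p ^ (m + 1 - i)) := by
        apply Finset.dvd_sum
        intro i hi
        obtain ⟨hi1, hi2⟩ := Finset.mem_Icc.mp hi
        obtain ⟨b, hb⟩ := hφ (c i)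
        have hd : (p : R) ∣ φ (c i) - (c i) ^ p := ⟨b, by rw [hb]; ring⟩
        have h := dvd_sub_pow_of_dvd_sub hd (m - i)
        rw [← pow_mul, ← pow_succ'] at h
        have h3 : ((p : R) ^ (m + 1)) ∣
            (p : R) ^ i * ((φ (c i)) ^ p ^ (m - i) - (c i) ^ p ^ (m - i + 1)) := by
          rw [show m + 1 = i + (m - i + 1) by omega, pow_add]
          exact mul_dvd_mul_left _ h
        rw [mul_sub] at h3
        rw [show m + 1 - i = m - i + 1 by omega]
        simpa [map_mul, map_pow, map_natCast] using h3
      have h := dvd_add h1 h2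
      rw [Finset.sum_sub_distrib] at h
      convert h using 1
      ring
    obtain ⟨z, hz⟩ := key
    refine ⟨Function.update c (m + 1) z, ?_⟩
    rw [Finset.sum_Icc_succ_top (by omega : 1 ≤ m + 1)]
    have hsum : ∑ i ∈ Finset.Icc 1 m,
        (p : R) ^ i * (Function.update c (m + 1) z i) ^ p ^ (m + 1 - i) =
        ∑ i ∈ Finset.Icc 1 m, (p : R) ^ i * (c i) ^ p ^ (m + 1 - i) :=
      Finset.sum_congr rfl fun i hi => by
        have hle := Finset.mem_Icc.mp hi
        rw [Function.update_of_ne (by omega)]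
    rw [hsum, Function.update_self, Nat.sub_self, pow_zero, pow_one]
    linear_combination hz
end

section
/- Let p be a prime, R a commutative ring, φ : R → R a lift of Frobenius, M an R-module and D : R → M a derivation over ℤ (an additive map with D(ab) = a·D(b) + b·D(a)). Then for every a ∈ R and every integer m ≥ 1 one has D(φ^m(a)) ∈ p^m·M, i.e. there exists y ∈ M with D(φ^m(a)) = p^m·y. -/
universe v


theorem myD_one {R : Type*} [CommRing R] {M : Type v} [AddCommGroup M] [Module R M]
    (D : R → M)
    (Dmul : ∀ a b : R, D (a * b) = a • D b + b • D a) : D 1 = 0 := by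
  have h := Dmul 1 1
  simp only [one_mul, one_smul] at h
  exact (right_eq_add.mp h)

theorem myD_zero {R : Type*} [CommRing R] {M : Type v} [AddCommGroup M] [Module R M]
    (D : R → M)
    (Dadd : ∀ a b : R, D (a + b) = D a + D b) : D 0 = 0 := by
  have h := Dadd 0 0
  simp only [add_zero] at h
  exact right_eq_add.mp h

theorem myD_nat {R : Type*} [CommRing R] {M : Type v} [AddCommGroup M] [Module R M]
    (D : R → M)
    (Dadd : ∀ a b : R, D (a + b) = D a + D b)
    (Dmul : ∀ a b : R, D (a * b) = a • D b + b • D a) (n : ℕ) : D (n : R) = 0 := by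
  induction n with
  | zero => simpa using myD_zero D Dadd
  | succ k ih =>
      push_cast
      rw [Dadd, ih, myD_one D Dmul, add_zero]

theorem myD_pow {R : Type*} [CommRing R] {M : Type v} [AddCommGroup M] [Module R M]
    (D : R → M)
    (Dmul : ∀ a b : R, D (a * b) = a • D b + b • D a) (a : R) (n : ℕ) :
    D (a ^ (n + 1)) = (n + 1) • (a ^ n • D a) := by
  induction n with
  | zero => simp
  | succ k ih =>
      rw [pow_succ, mul_comm, Dmul, ih, smul_comm, smul_smul, ← pow_succ',
        succ_nsmul (a ^ (k+1) • D a) (k+1)]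

theorem myD_frob {R : Type*} [CommRing R] {M : Type v} [AddCommGroup M] [Module R M]
    (D : R → M)
    (Dadd : ∀ a b : R, D (a + b) = D a + D b)
    (Dmul : ∀ a b : R, D (a * b) = a • D b + b • D a)
    (p : ℕ) (hp : 0 < p) (x c fx : R) (hc : fx = x ^ p + (p : R) * c) :
    D fx = (p : R) • (x ^ (p - 1) • D x + D c) := by
  obtain ⟨q, rfl⟩ : ∃ q, p = q + 1 := ⟨p - 1, (Nat.succ_pred_eq_of_pos hp).symm⟩
  subst hc
  rw [Dadd, myD_pow D Dmul, Dmul, myD_nat D Dadd Dmul, smul_zero, add_zero,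
    smul_add]
  simp only [Nat.add_sub_cancel]
  rw [← Nat.cast_smul_eq_nsmul R (q+1) (x ^ q • D x)]


theorem myD_main {R : Type*} [CommRing R] (p : ℕ) (hp : 0 < p)
    (φ : R →+* R) (hφ : ∀ a : R, ∃ b : R, φ a = a ^ p + (p : R) * b)
    (m : ℕ) (x : R) :
    ∃ L : List (R × R), ∀ (M : Type v) [AddCommGroup M] [Module R M] (D : R → M),
      (∀ a b : R, D (a + b) = D a + D b) →
      (∀ a b : R, D (a * b) = a • D b + b • D a) →
      D ((⇑φ)^[m] x) = (p : R) ^ m • (L.map fun q => q.1 • D q.2).sum := by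
  classical
  induction m with
  | zero =>
      exact ⟨[(1, x)], fun M _ _ D Dadd Dmul => by simp⟩
  | succ k ih =>
      obtain ⟨L, hL⟩ := ih
      set b : R → R := fun z => Classical.choose (hφ z) with hbdef
      refine ⟨L.flatMap (fun q => [(φ q.1 * q.2 ^ (p - 1), q.2), (φ q.1, b q.2)]), ?_⟩
      intro M _ instM D Dadd Dmul
      have h1 := @hL M ‹AddCommGroup M› (Module.compHom M (φ : R →+* R)) (fun z => D (φ z))
        (fun a c => by
          show D (φ (a + c)) = D (φ a) + D (φ c)
          rw [map_add, Dadd])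
        (fun a c => by
          show D (φ (a * c)) = φ a • D (φ c) + φ c • D (φ a)
          rw [map_mul, Dmul])
      have h2 : D ((⇑φ)^[k + 1] x)
          = φ ((p : R) ^ k) • (L.map fun q => (φ q.1) • D (φ q.2)).sum := by
        rw [Function.iterate_succ_apply']
        exact h1
      rw [map_pow, map_natCast] at h2
      have hterm : (fun q : R × R => φ q.1 • D (φ q.2))
          = fun q : R × R => (p : R) •
              ((φ q.1 * q.2 ^ (p - 1)) • D q.2 + φ q.1 • D (b q.2)) := by
        funext q
        rw [myD_frob D Dadd Dmul p hp q.2 (b q.2) (φ q.2) (Classical.choose_spec (hφ q.2)),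
          smul_comm, smul_add, smul_smul]
      have hsum : ∀ t : List (R × R), ((t.flatMap (fun q => [(φ q.1 * q.2 ^ (p - 1), q.2), (φ q.1, b q.2)])).map
            fun q => q.1 • D q.2).sum
          = (t.map fun q : R × R =>
              (φ q.1 * q.2 ^ (p - 1)) • D q.2 + φ q.1 • D (b q.2)).sum := by
        intro t
        induction t with
        | nil => simp
        | cons q t iht => simp only [List.flatMap_cons, List.map_append, List.map_cons,
            List.map_nil, List.sum_append, List.sum_cons, List.sum_nil, iht, add_zero]
      rw [h2, hterm,
        show (fun q : R × R => (p : R) •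
              ((φ q.1 * q.2 ^ (p - 1)) • D q.2 + φ q.1 • D (b q.2)))
          = (fun y : M => (p : R) • y) ∘ (fun q : R × R =>
              (φ q.1 * q.2 ^ (p - 1)) • D q.2 + φ q.1 • D (b q.2)) from rfl,
        ← List.map_map, ← List.smul_sum, smul_smul, ← pow_succ, hsum L]

/-- If `φ : R → R` is a lift of Frobenius, `M` an `R`-module and `D : R → M` a
derivation over `ℤ`, then `D(φ^m(a)) ∈ p^m·M` for every `a ∈ R` and `m ≥ 1`. -/
theorem stmt_2 (p : ℕ) (hp : p.Prime) (R : Type*) [CommRing R]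
    (M : Type*) [AddCommGroup M] [Module R M]
    (φ : R →+* R) (hφ : ∀ a : R, ∃ b : R, φ a = a ^ p + (p : R) * b)
    (D : R → M)
    (Dadd : ∀ a b : R, D (a + b) = D a + D b)
    (Dmul : ∀ a b : R, D (a * b) = a • D b + b • D a)
    (a : R) (m : ℕ) (hm : 1 ≤ m) :
    ∃ y : M, D ((⇑φ)^[m] a) = (p : R) ^ m • y := by
  obtain ⟨L, hL⟩ := myD_main p hp.pos φ hφ m a
  exact ⟨(L.map fun q => q.1 • D q.2).sum, hL M D Dadd Dmul⟩
end

section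
/- Let p be a prime, R a commutative ring, and M an R-module which is p-adically separated, i.e. the intersection over all m ≥ 0 of the submodules p^m·M is zero. Let φ : R → R be a lift of Frobenius, let t_1, …, t_n ∈ R, let δ_1, …, δ_n : R → R be derivations over ℤ, and for each i let D_i : M → M be an additive map satisfying the Leibniz rule D_i(a·x) = δ_i(a)·x + a·D_i(x) for all a ∈ R, x ∈ M. Let F : M → M be an additive map which is φ-semilinear (F(a·x) = φ(a)·F(x)) and horizontal, meaning D_i(F(x)) = Σ_{j=1}^n δ_i(φ(t_j))·F(D_j(x)) for all x ∈ M and all i. If e ∈ M satisfies F(e) = e, then D_i(e) = 0 for all i = 1, …, n. -/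
/-- Abstract form of the Lemma: a section of an `F`-crystal fixed by `F(φ)φ*`
is flat for the connection. Here `R` is a commutative ring, `M` a `p`-adically
separated `R`-module, `φ` a lift of Frobenius, `δ_1,…,δ_n` derivations of `R`,
`D_1,…,D_n` maps on `M` satisfying the Leibniz rule over the `δ_i`, and
`F : M → M` a `φ`-semilinear horizontal map. If `F(e) = e` then `D_i(e) = 0`
for all `i`. -/
theorem stmt_3 (p : ℕ) (hp : p.Prime)
    (R : Type*) [CommRing R] (M : Type*) [AddCommGroup M] [Module R M]
    (hsep : ∀ x : M, (∀ m : ℕ, ∃ y : M, x = (p : R) ^ m • y) → x = 0)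
    (φ : R →+* R) (hφ : ∀ a : R, ∃ b : R, φ a = a ^ p + (p : R) * b)
    (n : ℕ) (t : Fin n → R)
    (δ : Fin n → R → R)
    (hδadd : ∀ i, ∀ a b : R, δ i (a + b) = δ i a + δ i b)
    (hδmul : ∀ i, ∀ a b : R, δ i (a * b) = a * δ i b + b * δ i a)
    (D : Fin n → M → M)
    (hDadd : ∀ i, ∀ x y : M, D i (x + y) = D i x + D i y)
    (hDleib : ∀ i, ∀ (a : R) (x : M), D i (a • x) = δ i a • x + a • D i x)
    (F : M → M)
    (hFadd : ∀ x y : M, F (x + y) = F x + F y)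
    (hFsemi : ∀ (a : R) (x : M), F (a • x) = φ a • F x)
    (hhor : ∀ (x : M) (i : Fin n), D i (F x) = ∑ j, δ i (φ (t j)) • F (D j x))
    (e : M) (he : F e = e) :
    ∀ i, D i e = 0 := by
  -- δ i 1 = 0
  have hδone : ∀ i, δ i (1 : R) = 0 := by
    intro i
    have h := hδmul i 1 1
    simp only [one_mul, mul_one] at h
    linear_combination -h
  -- δ i of natural number casts is 0
  have hδnat : ∀ i, ∀ k : ℕ, δ i (k : R) = 0 := by
    intro i k
    induction k with
    | zero =>
      have h := hδadd i 0 0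
      simp only [add_zero] at h
      rw [Nat.cast_zero]
      linear_combination -h
    | succ k ih =>
      have h := hδadd i (k : R) 1
      push_cast
      rw [h, ih, hδone, add_zero]
  -- power rule for δ
  have hδpow : ∀ i, ∀ a : R, ∀ k : ℕ, δ i (a ^ (k + 1)) = ((k : R) + 1) * a ^ k * δ i a := by
    intro i a k
    induction k with
    | zero => simp
    | succ k ih =>
      have h := hδmul i a (a ^ (k + 1))
      rw [pow_succ', h, ih]
      push_cast
      ring
  -- δ i (φ (t j)) is divisible by p
  have hdiv : ∀ i j, ∃ c : R, δ i (φ (t j)) = (p : R) * c := by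
    intro i j
    obtain ⟨b, hb⟩ := hφ (t j)
    obtain ⟨q, hq⟩ : ∃ q, p = q + 1 := ⟨p - 1, (Nat.succ_pred_eq_of_pos hp.pos).symm⟩
    refine ⟨(t j) ^ q * δ i (t j) + δ i b, ?_⟩
    rw [hb, hδadd, hδmul]
    rw [hq, hδpow, hδnat]
    push_cast
    ring
  choose c hc using hdiv
  -- F of p^m • x
  have hFp : ∀ (m : ℕ) (x : M), F ((p : R) ^ m • x) = (p : R) ^ m • F x := by
    intro m x
    rw [hFsemi, map_pow, map_natCast]
  -- main induction: D i e ∈ p^m M for all m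
  intro i
  apply hsep
  have key : ∀ m : ℕ, ∀ i, ∃ y : M, D i e = (p : R) ^ m • y := by
    intro m
    induction m with
    | zero => intro i; exact ⟨D i e, by simp⟩
    | succ m ih =>
      intro i
      choose y hy using ih
      refine ⟨∑ j, c i j • F (y j), ?_⟩
      calc D i e = D i (F e) := by rw [he]
        _ = ∑ j, δ i (φ (t j)) • F (D j e) := hhor e i
        _ = ∑ j, ((p : R) * c i j) • ((p : R) ^ m • F (y j)) := by
            refine Finset.sum_congr rfl fun j _ => ?_
            rw [hc, hy, hFp]
        _ = ∑ j, (p : R) ^ (m + 1) • (c i j • F (y j)) := by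
            refine Finset.sum_congr rfl fun j _ => ?_
            rw [smul_smul, smul_smul]
            congr 1
            ring
        _ = (p : R) ^ (m + 1) • ∑ j, c i j • F (y j) := (Finset.smul_sum).symm
  exact fun m => key m i
end

section
/- Let p be a prime, N ≥ 1 an integer, and w : {0, …, N−1} → ℕ a weight function. Let L be an N×N matrix with entries in ℤ_p (viewed inside ℚ_p) which is block-unipotent with respect to w, i.e. L_{ii} = 1 for all i and L_{ij} = 0 whenever i ≠ j and w(i) ≥ w(j). Let P be the N×N diagonal matrix over ℚ_p with entries P_{ii} = p^{w(i)}. Then the sequence of partial products G_M = (P^{−M} L P^{M})·(P^{−(M−1)} L P^{M−1})⋯(P^{−1} L P) (factors ordered from right to left for increasing m) converges as M → ∞ in the space of N×N matrices over ℚ_p, with the entrywise topology coming from the p-adic norm on ℚ_p. -/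
open Filter Matrix

attribute [local instance] Matrix.normedAddCommGroup


/-- Convergence of the partial products
`G_M = (P^{-M} L P^M)·(P^{-(M-1)} L P^{M-1})⋯(P^{-1} L P)` for a block-unipotent
matrix `L` with `ℤ_p`-entries and `P = diag(p^{w(i)})`, in the space of `N×N`
matrices over `ℚ_p` with the entrywise `p`-adic topology. -/
theorem stmt_4 (p : ℕ) [hp : Fact p.Prime] (N : ℕ) (hN : 1 ≤ N)
    (w : Fin N → ℕ)
    (L : Matrix (Fin N) (Fin N) ℚ_[p])
    (hLint : ∀ i j, ‖L i j‖ ≤ 1)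
    (hLdiag : ∀ i, L i i = 1)
    (hLunip : ∀ i j, i ≠ j → w j ≤ w i → L i j = 0)
    (P : Matrix (Fin N) (Fin N) ℚ_[p])
    (hP : P = Matrix.diagonal fun i => (p : ℚ_[p]) ^ (w i))
    (G : ℕ → Matrix (Fin N) (Fin N) ℚ_[p])
    (hG0 : G 0 = 1)
    (hGrec : ∀ M : ℕ, G (M + 1) = (P ^ (-(M + 1 : ℤ)) * L * P ^ (M + 1 : ℤ)) * G M) :
    ∃ Glim : Matrix (Fin N) (Fin N) ℚ_[p],
      Filter.Tendsto G Filter.atTop (nhds Glim) := by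
  have hp1 : (1 : ℝ) < p := by exact_mod_cast hp.out.one_lt
  have hppos : (0 : ℝ) < p := lt_trans one_pos hp1
  have hpne : (p : ℚ_[p]) ≠ 0 := by
    exact_mod_cast (Nat.cast_ne_zero (R := ℚ_[p])).mpr hp.out.ne_zero
  -- entries of the conjugated matrix
  have hentry : ∀ (k : ℕ) (i j : Fin N),
      (P ^ (-(k : ℤ)) * L * P ^ (k : ℤ)) i j
        = (p : ℚ_[p]) ^ ((k * w j : ℤ) - (k * w i : ℤ)) * L i j := by
    intro k i j
    have hdet : IsUnit P.det := by
      rw [hP, Matrix.det_diagonal]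
      exact isUnit_iff_ne_zero.mpr
        (Finset.prod_ne_zero_iff.mpr fun i _ => pow_ne_zero _ hpne)
    have hpow : P ^ (k : ℤ) = Matrix.diagonal fun i => (p : ℚ_[p]) ^ ((k * w i : ℤ)) := by
      rw [zpow_natCast, hP, Matrix.diagonal_pow]
      refine congrArg _ (funext fun i => ?_)
      simp only [Pi.pow_apply]
      rw [← pow_mul, ← zpow_natCast]
      congr 1
      push_cast; ring
    have hnegpow : P ^ (-(k : ℤ)) = Matrix.diagonal fun i => (p : ℚ_[p]) ^ (-(k * w i : ℤ)) := by
      rw [Matrix.zpow_neg hdet, hpow]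
      refine Matrix.inv_eq_right_inv ?_
      rw [Matrix.diagonal_mul_diagonal]
      have h1 : (fun i => (p : ℚ_[p]) ^ ((k * w i : ℤ)) * (p : ℚ_[p]) ^ (-(k * w i : ℤ)))
          = fun _ => (1 : ℚ_[p]) :=
        funext fun i => by rw [← zpow_add₀ hpne, add_neg_cancel, zpow_zero]
      rw [h1, Matrix.diagonal_one]
    rw [hnegpow, hpow, Matrix.mul_assoc, Matrix.diagonal_mul, Matrix.mul_diagonal,
      ← mul_assoc, mul_comm ((p : ℚ_[p]) ^ (-(k * w i : ℤ))), mul_assoc, ← zpow_add₀ hpne,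
      mul_comm (L i j), sub_eq_add_neg]
    congr 2
    ring
  -- entrywise norm bound on the conjugated matrix
  have hAle : ∀ (k : ℕ) (i j : Fin N), ‖(P ^ (-(k : ℤ)) * L * P ^ (k : ℤ)) i j‖ ≤ 1 := by
    intro k i j
    rw [hentry]
    rcases eq_or_ne ((k * w j : ℤ) - (k * w i : ℤ)) 0 with h | h
    · rw [h]
      simpa using hLint i j
    rcases le_or_gt (w j) (w i) with hw | hw
    · rcases eq_or_ne i j with rfl | hij
      · simp at h
      · rw [hLunip i j hij hw, mul_zero, norm_zero]; exact zero_le_one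
    · have he : (0 : ℤ) ≤ (k * w j : ℤ) - (k * w i : ℤ) := by
        have h2 : (k * w i : ℤ) ≤ (k * w j : ℤ) :=
          mul_le_mul_of_nonneg_left (by exact_mod_cast hw.le) (by positivity)
        linarith
      calc ‖(p : ℚ_[p]) ^ ((k * w j : ℤ) - (k * w i : ℤ)) * L i j‖
          = ‖(p : ℚ_[p]) ^ ((k * w j : ℤ) - (k * w i : ℤ))‖ * ‖L i j‖ := norm_mul _ _
        _ ≤ ‖(p : ℚ_[p]) ^ ((k * w j : ℤ) - (k * w i : ℤ))‖ * 1 := by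
            exact mul_le_mul_of_nonneg_left (hLint i j) (norm_nonneg _)
        _ ≤ 1 := by
            rw [mul_one, Padic.norm_p_zpow]
            calc (p : ℝ) ^ (-((k * w j : ℤ) - (k * w i : ℤ)))
                ≤ (p : ℝ) ^ (0 : ℤ) := zpow_le_zpow_right₀ hp1.le (by linarith)
              _ = 1 := zpow_zero _
  -- the difference from the identity is small
  have hAone : ∀ (k : ℕ) (i j : Fin N),
      ‖(P ^ (-(k : ℤ)) * L * P ^ (k : ℤ)) i j - (1 : Matrix (Fin N) (Fin N) ℚ_[p]) i j‖
        ≤ ((p : ℝ)⁻¹) ^ k := by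
    intro k i j
    rcases eq_or_ne i j with rfl | hij
    · have h0 : ((k * w i : ℤ) - (k * w i : ℤ)) = 0 := sub_self _
      rw [hentry, hLdiag, Matrix.one_apply_eq, mul_one, h0, zpow_zero, sub_self, norm_zero]
      positivity
    · rw [Matrix.one_apply_ne hij, sub_zero, hentry]
      rcases le_or_gt (w j) (w i) with hw | hw
      · rw [hLunip i j hij hw, mul_zero, norm_zero]
        positivity
      · have he : (k : ℤ) ≤ (k * w j : ℤ) - (k * w i : ℤ) := by
          have h1 : (w i : ℤ) + 1 ≤ (w j : ℤ) := by exact_mod_cast hw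
          nlinarith [Int.ofNat_nonneg k]
        calc ‖(p : ℚ_[p]) ^ ((k * w j : ℤ) - (k * w i : ℤ)) * L i j‖
            ≤ ‖(p : ℚ_[p]) ^ ((k * w j : ℤ) - (k * w i : ℤ))‖ * 1 := by
              rw [norm_mul]
              exact mul_le_mul_of_nonneg_left (hLint i j) (norm_nonneg _)
          _ ≤ ((p : ℝ)⁻¹) ^ k := by
              rw [mul_one, Padic.norm_p_zpow, ← zpow_natCast ((p:ℝ)⁻¹), _root_.inv_zpow']
              exact zpow_le_zpow_right₀ hp1.le (by linarith)
  -- submultiplicativity of the sup norm over ℚ_p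
  have hmul : ∀ A B : Matrix (Fin N) (Fin N) ℚ_[p], ‖A * B‖ ≤ ‖A‖ * ‖B‖ := by
    intro A B
    rw [Matrix.norm_le_iff (mul_nonneg (norm_nonneg _) (norm_nonneg _))]
    intro i j
    rw [Matrix.mul_apply]
    refine IsUltrametricDist.norm_sum_le_of_forall_le_of_nonneg
      (mul_nonneg (norm_nonneg _) (norm_nonneg _)) (fun l _ => ?_)
    rw [norm_mul]
    exact mul_le_mul (Matrix.norm_entry_le_entrywise_sup_norm A)
      (Matrix.norm_entry_le_entrywise_sup_norm B) (norm_nonneg _) (norm_nonneg _)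
  have hGle : ∀ M, ‖G M‖ ≤ 1 := by
    intro M
    induction M with
    | zero =>
      rw [hG0, Matrix.norm_le_iff zero_le_one]
      intro i j
      rcases eq_or_ne i j with rfl | hij
      · simp
      · simp [Matrix.one_apply_ne hij]
    | succ M ih =>
      rw [hGrec M]
      calc ‖(P ^ (-(M + 1 : ℤ)) * L * P ^ (M + 1 : ℤ)) * G M‖
          ≤ ‖P ^ (-(M + 1 : ℤ)) * L * P ^ (M + 1 : ℤ)‖ * ‖G M‖ := hmul _ _
        _ ≤ 1 * 1 := by
            refine mul_le_mul ?_ ih (norm_nonneg _) zero_le_one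
            rw [Matrix.norm_le_iff zero_le_one]
            intro i j
            have := hAle (M + 1) i j
            simpa using this
        _ = 1 := one_mul 1
  have hdiff : ∀ M : ℕ, ‖G (M + 1) - G M‖ ≤ (p : ℝ)⁻¹ * ((p : ℝ)⁻¹) ^ M := by
    intro M
    have hd : G (M + 1) - G M
        = (P ^ (-(M + 1 : ℤ)) * L * P ^ (M + 1 : ℤ) - 1) * G M := by
      rw [hGrec M, Matrix.sub_mul, Matrix.one_mul]
    rw [hd]
    calc ‖(P ^ (-(M + 1 : ℤ)) * L * P ^ (M + 1 : ℤ) - 1) * G M‖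
        ≤ ‖P ^ (-(M + 1 : ℤ)) * L * P ^ (M + 1 : ℤ) - 1‖ * ‖G M‖ := hmul _ _
      _ ≤ ((p : ℝ)⁻¹) ^ (M + 1) * 1 := by
          refine mul_le_mul ?_ (hGle M) (norm_nonneg _) (by positivity)
          rw [Matrix.norm_le_iff (by positivity)]
          intro i j
          have := hAone (M + 1) i j
          simpa using this
      _ = (p : ℝ)⁻¹ * ((p : ℝ)⁻¹) ^ M := by rw [mul_one, pow_succ']
  have hcauchy : CauchySeq G := by
    refine cauchySeq_of_le_geometric ((p : ℝ)⁻¹) ((p : ℝ)⁻¹) (inv_lt_one_of_one_lt₀ hp1) ?_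
    intro n
    rw [dist_eq_norm, norm_sub_rev]
    exact hdiff n
  obtain ⟨Glim, hGlim⟩ := cauchySeq_tendsto_of_complete hcauchy
  exact ⟨Glim, hGlim⟩
end

section
/- Let p be a prime and k a perfect field of characteristic p, with ring of Witt vectors W = 𝕎(k) and Frobenius ring endomorphism σ : W → W. Let N ≥ 1, let w : {0, …, N−1} → ℕ be a weight function, let L be an N×N matrix over W which is block-unipotent with respect to w (L_{ii} = 1 for all i, and L_{ij} = 0 whenever i ≠ j and w(i) ≥ w(j)), and let P be the diagonal matrix with P_{ii} = p^{w(i)}. Then there exists a unique N×N matrix T over W which is block-unipotent with respect to w and satisfies P·σ(T) = T·L·P, where σ(T) denotes the matrix obtained by applying σ to each entry of T. Moreover this unique T satisfies T_{ij} ∈ p^{w(j)−w(i)}·W whenever w(i) < w(j). -/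
namespace Stmt5Aux

variable {p : ℕ} [hp : Fact p.Prime] {k : Type*} [Field k] [CharP k p] [PerfectRing k p]

open WittVector

local notation "W" => WittVector p k
local notation "φ" => frobeniusEquiv p k

lemma frob_eq (x : W) : (frobeniusEquiv p k) x = WittVector.frobenius x := rfl

lemma symm_pow_mul (n : ℕ) (x : W) :
    (φ).symm ((p : W) ^ n * x) = (p : W) ^ n * (φ).symm x := by
  rw [map_mul, map_pow, map_natCast]

lemma pd_coeff {n : ℕ} (y : W) {i : ℕ} (hi : i < n) :
    ((p : W) ^ n * y).coeff i = 0 := by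
  induction n generalizing i y with
  | zero => omega
  | succ n ih =>
    have h : (p : W) ^ (n + 1) * y =
        verschiebung (WittVector.frobenius ((p : W) ^ n * y)) := by
      rw [verschiebung_frobenius, pow_succ]; ring
    rw [h]
    cases i with
    | zero => exact verschiebung_coeff_zero _
    | succ i =>
      rw [verschiebung_coeff_succ, coeff_frobenius_charP, ih y (by omega)]
      exact zero_pow hp.out.ne_zero

lemma exists_pd {n : ℕ} {x : W} (h : ∀ i < n, x.coeff i = 0) :
    ∃ y, x = (p : W) ^ n * y := by
  induction n generalizing x with
  | zero => exact ⟨x, by simp⟩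
  | succ n ih =>
    have hx1 : x = verschiebung (x.shift 1) := by
      simpa using eq_iterate_verschiebung (x := x) (n := 1) (fun i hi => h i (by omega))
    obtain ⟨y, hy⟩ := ih (x := x.shift 1)
      (fun i hi => by rw [shift_coeff]; exact h (1 + i) (by omega))
    refine ⟨(φ).symm y, ?_⟩
    have hfz : WittVector.frobenius ((φ).symm (x.shift 1)) = x.shift 1 := by
      rw [← frob_eq, RingEquiv.apply_symm_apply]
    calc x = verschiebung (WittVector.frobenius ((φ).symm (x.shift 1))) := by rw [hfz, ← hx1]
    _ = (φ).symm (x.shift 1) * p := verschiebung_frobenius _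
    _ = ((p : W) ^ n * (φ).symm y) * p := by rw [hy, symm_pow_mul]
    _ = (p : W) ^ (n + 1) * (φ).symm y := by rw [pow_succ]; ring

lemma pd_of_coeff_eq {n : ℕ} {a b : W} (h : ∀ i < n, a.coeff i = b.coeff i) :
    ∃ y, a - b = (p : W) ^ n * y := by
  apply exists_pd
  have ht : WittVector.truncate n a - WittVector.truncate n b = 0 := by
    rw [sub_eq_zero]
    apply TruncatedWittVector.ext
    intro i
    rw [WittVector.coeff_truncate, WittVector.coeff_truncate]
    exact h i i.2
  rw [← map_sub] at ht
  exact fun i hi => (WittVector.mem_ker_truncate _ _).mp (RingHom.mem_ker.mpr ht) i hi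

lemma coeff_eq_of_pd {n : ℕ} {a b : W} (h : ∃ y, a - b = (p : W) ^ n * y)
    {i : ℕ} (hi : i < n) : a.coeff i = b.coeff i := by
  obtain ⟨y, hy⟩ := h
  have ht : WittVector.truncate n a = WittVector.truncate n b := by
    rw [← sub_eq_zero, ← map_sub, hy]
    apply TruncatedWittVector.ext
    intro j
    rw [WittVector.coeff_truncate, TruncatedWittVector.coeff_zero]
    exact pd_coeff y j.2
  calc a.coeff i = (WittVector.truncate n a).coeff ⟨i, hi⟩ :=
        (WittVector.coeff_truncate a ⟨i, hi⟩).symm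
  _ = (WittVector.truncate n b).coeff ⟨i, hi⟩ := by rw [ht]
  _ = b.coeff i := WittVector.coeff_truncate b ⟨i, hi⟩

lemma eq_zero_of_pd {x : W} (h : ∀ n, ∃ y, x = (p : W) ^ n * y) : x = 0 := by
  apply WittVector.ext
  intro i
  obtain ⟨y, hy⟩ := h (i + 1)
  rw [hy, WittVector.zero_coeff]
  exact pd_coeff y (Nat.lt_succ_self i)

lemma pd_mono {m n : ℕ} (h : n ≤ m) {x : W} :
    (∃ y, x = (p : W) ^ m * y) → ∃ y, x = (p : W) ^ n * y := by
  rintro ⟨y, rfl⟩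
  exact ⟨(p : W) ^ (m - n) * y, by rw [← mul_assoc, ← pow_add, Nat.add_sub_cancel' h]⟩

/-- iteration sequence converging to the solution of `σ c = p^d c + S`. -/
noncomputable def seq (d : ℕ) (S : W) : ℕ → W
  | 0 => 0
  | n + 1 => (φ).symm ((p : W) ^ d * seq d S n + S)

lemma seq_step_diff (d : ℕ) (S : W) (a b : W) :
    (φ).symm ((p : W) ^ d * a + S) - (φ).symm ((p : W) ^ d * b + S)
      = (p : W) ^ d * (φ).symm (a - b) := by
  rw [← map_sub, show ((p : W) ^ d * a + S) - ((p : W) ^ d * b + S) = (p : W) ^ d * (a - b) by ring,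
    symm_pow_mul]

lemma seq_diff_succ {d : ℕ} (hd : 1 ≤ d) (S : W) :
    ∀ n, ∃ y, seq d S (n + 1) - seq d S n = (p : W) ^ n * y := by
  intro n
  induction n with
  | zero => exact ⟨seq d S 1 - seq d S 0, by simp⟩
  | succ n ih =>
    obtain ⟨y, hy⟩ := ih
    refine pd_mono (m := n + d) (by omega) ?_
    refine ⟨(φ).symm y, ?_⟩
    have e : seq d S (n + 1 + 1) - seq d S (n + 1)
        = (p : W) ^ d * (φ).symm (seq d S (n + 1) - seq d S n) :=
      seq_step_diff d S (seq d S (n + 1)) (seq d S n)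
    rw [e, hy, symm_pow_mul, pow_add]
    ring

lemma seq_diff {d : ℕ} (hd : 1 ≤ d) (S : W) :
    ∀ n m, n ≤ m → ∃ y, seq d S m - seq d S n = (p : W) ^ n * y := by
  intro n m hnm
  induction m with
  | zero =>
    have : n = 0 := by omega
    subst this; exact ⟨0, by simp⟩
  | succ m ih =>
    rcases Nat.lt_or_ge n (m + 1) with h | h
    · obtain ⟨y1, hy1⟩ := ih (by omega)
      obtain ⟨y2, hy2⟩ := pd_mono (m := m) (n := n) (by omega) (seq_diff_succ hd S m)
      exact ⟨y2 + y1, by rw [show seq d S (m+1) - seq d S n =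
        (seq d S (m+1) - seq d S m) + (seq d S m - seq d S n) by ring, hy1, hy2]; ring⟩
    · have : n = m + 1 := by omega
      subst this; exact ⟨0, by simp⟩

/-- The limit of the iteration sequence. -/
noncomputable def lim (d : ℕ) (S : W) : W :=
  WittVector.mk p (fun i => (seq d S (i + 1)).coeff i)

lemma lim_diff {d : ℕ} (hd : 1 ≤ d) (S : W) (n : ℕ) :
    ∃ y, lim d S - seq d S n = (p : W) ^ n * y := by
  apply pd_of_coeff_eq
  intro i hi
  have h1 : (lim d S).coeff i = (seq d S (i + 1)).coeff i := by
    rw [lim, WittVector.coeff_mk]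
  rw [h1]
  exact (coeff_eq_of_pd (seq_diff hd S (i + 1) n (by omega)) (Nat.lt_succ_self i)).symm

lemma sol_exists {d : ℕ} (hd : 1 ≤ d) (S : W) :
    ∃ c : W, WittVector.frobenius c = (p : W) ^ d * c + S := by
  set c := lim d S with hc
  have key : ∀ n : ℕ, ∃ y, (φ).symm ((p : W) ^ d * c + S) - c = (p : W) ^ n * y := by
    intro n
    obtain ⟨y1, hy1⟩ := lim_diff hd S n
    obtain ⟨y2, hy2⟩ := lim_diff hd S (n + 1)
    have step : (φ).symm ((p : W) ^ d * c + S) - seq d S (n + 1)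
        = (p : W) ^ d * (φ).symm (c - seq d S n) :=
      seq_step_diff d S c (seq d S n)
    refine ⟨(p : W) ^ d * (φ).symm y1 - (p : W) * y2, ?_⟩
    have : (φ).symm ((p : W) ^ d * c + S) - c
        = ((φ).symm ((p : W) ^ d * c + S) - seq d S (n + 1)) - (c - seq d S (n + 1)) := by ring
    rw [this, step, hy1, hy2, symm_pow_mul, pow_succ]
    ring
  have h0 : (φ).symm ((p : W) ^ d * c + S) = c := by
    have := eq_zero_of_pd (x := (φ).symm ((p : W) ^ d * c + S) - c) key
    linear_combination this
  refine ⟨c, ?_⟩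
  rw [← frob_eq, ← h0, RingEquiv.apply_symm_apply]
  rw [h0]

lemma sol_unique {d : ℕ} (hd : 1 ≤ d) (S : W) {x x' : W}
    (hx : WittVector.frobenius x = (p : W) ^ d * x + S)
    (hx' : WittVector.frobenius x' = (p : W) ^ d * x' + S) : x = x' := by
  set D := x - x' with hD
  have hfD : WittVector.frobenius D = (p : W) ^ d * D := by
    rw [hD, map_sub, hx, hx']; ring
  have hDfix : D = (p : W) ^ d * (φ).symm D := by
    have h1 : (φ).symm (WittVector.frobenius D) = D := by
      rw [← frob_eq, RingEquiv.symm_apply_apply]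
    conv_lhs => rw [← h1, hfD, symm_pow_mul]
  have key : ∀ n : ℕ, ∃ y, D = (p : W) ^ n * y := by
    intro n
    induction n with
    | zero => exact ⟨D, by simp⟩
    | succ n ih =>
      obtain ⟨y, hy⟩ := ih
      refine pd_mono (m := n + d) (by omega) ⟨(φ).symm y, ?_⟩
      rw [hDfix, hy, symm_pow_mul, pow_add]
      ring
  have : D = 0 := eq_zero_of_pd key
  rw [hD, sub_eq_zero] at this
  exact this

end Stmt5Aux

section Matrix

open WittVector Stmt5Aux

variable {p : ℕ} [hp : Fact p.Prime] {k : Type*} [Field k] [CharP k p] [PerfectRing k p]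
variable {N : ℕ}

/-- The matrix `T`, defined entrywise by recursion on the weight gap. -/
noncomputable def Tmat (w : Fin N → ℕ) (L : Matrix (Fin N) (Fin N) (WittVector p k))
    (i j : Fin N) : WittVector p k :=
  if h : w i < w j then
    (p : WittVector p k) ^ (w j - w i) *
      Classical.choose (sol_exists (d := w j - w i) (by omega)
        ((L i j + ∑ m ∈ (Finset.univ.filter fun m => w i < w m ∧ w m < w j).attach,
          Tmat w L i m.1 * L m.1 j)))
  else if i = j then 1 else 0
termination_by w j - w i
decreasing_by
  all_goals
    first
    | (have hm := m.2
       simp only [Finset.mem_filter, Finset.mem_univ, true_and] at hm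
       omega)
    | omega

variable (w : Fin N → ℕ) (L : Matrix (Fin N) (Fin N) (WittVector p k))

/-- The lower-gap source term. -/
noncomputable def Smat (i j : Fin N) : WittVector p k :=
  L i j + ∑ m ∈ (Finset.univ.filter fun m => w i < w m ∧ w m < w j), Tmat w L i m * L m j

lemma Tmat_diag (i : Fin N) : Tmat w L i i = 1 := by
  rw [Tmat]; simp

lemma Tmat_unip {i j : Fin N} (hij : i ≠ j) (hw : w j ≤ w i) : Tmat w L i j = 0 := by
  rw [Tmat]; simp [hij, Nat.not_lt.mpr hw]

lemma Tmat_spec {i j : Fin N} (h : w i < w j) :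
    (∃ c, Tmat w L i j = (p : WittVector p k) ^ (w j - w i) * c) ∧
    WittVector.frobenius (Tmat w L i j)
      = (p : WittVector p k) ^ (w j - w i) * (Tmat w L i j + Smat w L i j) := by
  rw [Tmat]
  rw [dif_pos h]
  set S := (L i j + ∑ m ∈ (Finset.univ.filter fun m => w i < w m ∧ w m < w j).attach,
      Tmat w L i m.1 * L m.1 j) with hS
  have hSeq : S = Smat w L i j := by
    rw [hS, Smat, Finset.sum_attach _ (fun m => Tmat w L i m * L m j)]
  set c := Classical.choose (sol_exists (p := p) (k := k) (d := w j - w i) (by omega) S) with hc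
  have hspec : WittVector.frobenius c = (p : WittVector p k) ^ (w j - w i) * c + S :=
    Classical.choose_spec (sol_exists (d := w j - w i) (by omega) S)
  refine ⟨⟨c, rfl⟩, ?_⟩
  rw [map_mul, map_pow, map_natCast, hspec, hSeq]

lemma sum_split (T : Fin N → Fin N → WittVector p k)
    (hTdiag : ∀ i, T i i = 1) (hTunip : ∀ i j, i ≠ j → w j ≤ w i → T i j = 0)
    (hLdiag : ∀ i, L i i = 1) (hLunip : ∀ i j, i ≠ j → w j ≤ w i → L i j = 0)
    {i j : Fin N} (hij : w i < w j) :
    ∑ m, T i m * L m j = T i j +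
      (L i j + ∑ m ∈ (Finset.univ.filter fun m => w i < w m ∧ w m < w j), T i m * L m j) := by
  have hijne : i ≠ j := fun h => by subst h; omega
  set s := (Finset.univ.filter fun m => w i < w m ∧ w m < w j) with hs
  have his : i ∉ s := by simp [hs]
  have hjs : j ∉ s := by simp [hs]
  have hij2 : i ∉ insert j s := by simp [hijne, his]
  have hsub : insert i (insert j s) ⊆ Finset.univ := Finset.subset_univ _
  have hvanish : ∀ m ∈ Finset.univ, m ∉ insert i (insert j s) → T i m * L m j = 0 := by
    intro m _ hm
    simp only [Finset.mem_insert, hs, Finset.mem_filter, Finset.mem_univ, true_and, not_or,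
      not_and, Nat.not_lt] at hm
    obtain ⟨hmi, hmj, hmw⟩ := hm
    rcases Nat.lt_or_ge (w i) (w m) with h1 | h1
    · rw [hLunip m j hmj (hmw h1), mul_zero]
    · rw [hTunip i m (fun h => hmi h.symm) h1, zero_mul]
  rw [← Finset.sum_subset hsub hvanish, Finset.sum_insert hij2, Finset.sum_insert hjs,
    hTdiag i, hLdiag j]
  ring

lemma sum_diag (T : Fin N → Fin N → WittVector p k)
    (hTdiag : ∀ i, T i i = 1) (hTunip : ∀ i j, i ≠ j → w j ≤ w i → T i j = 0)
    (hLdiag : ∀ i, L i i = 1) (hLunip : ∀ i j, i ≠ j → w j ≤ w i → L i j = 0)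
    (i : Fin N) : ∑ m, T i m * L m i = 1 := by
  rw [Finset.sum_eq_single i]
  · rw [hTdiag i, hLdiag i, one_mul]
  · intro m _ hm
    rcases le_or_gt (w m) (w i) with h1 | h1
    · rw [hTunip i m (fun h => hm h.symm) h1, zero_mul]
    · rw [hLunip m i hm (Nat.le_of_lt h1), mul_zero]
  · intro h; exact absurd (Finset.mem_univ i) h

lemma sum_zero (T : Fin N → Fin N → WittVector p k)
    (hTdiag : ∀ i, T i i = 1) (hTunip : ∀ i j, i ≠ j → w j ≤ w i → T i j = 0)
    (hLdiag : ∀ i, L i i = 1) (hLunip : ∀ i j, i ≠ j → w j ≤ w i → L i j = 0)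
    {i j : Fin N} (hij : i ≠ j) (hw : w j ≤ w i) : ∑ m, T i m * L m j = 0 := by
  apply Finset.sum_eq_zero
  intro m _
  by_cases hmi : m = i
  · subst hmi; rw [hLunip m j hij hw, mul_zero]
  by_cases hmj : m = j
  · subst hmj; rw [hTunip i m (fun h => hmi h.symm) hw, zero_mul]
  rcases le_or_gt (w m) (w i) with h1 | h1
  · rw [hTunip i m (fun h => hmi h.symm) h1, zero_mul]
  · rw [hLunip m j hmj (by omega), mul_zero]

lemma entry_eq (hLdiag : ∀ i, L i i = 1) (hLunip : ∀ i j, i ≠ j → w j ≤ w i → L i j = 0)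
    (i j : Fin N) :
    (p : WittVector p k) ^ (w i) * WittVector.frobenius (Tmat w L i j)
      = (∑ m, Tmat w L i m * L m j) * (p : WittVector p k) ^ (w j) := by
  by_cases hij : w i < w j
  · obtain ⟨_, hspec⟩ := Tmat_spec w L hij
    have hw : (p : WittVector p k) ^ (w i) * (p : WittVector p k) ^ (w j - w i)
        = (p : WittVector p k) ^ (w j) := by
      rw [← pow_add]; congr 1; omega
    rw [hspec, sum_split w L (Tmat w L)
      (Tmat_diag w L) (fun i j h1 h2 => Tmat_unip w L h1 h2) hLdiag hLunip hij,
      ← mul_assoc, hw, Smat]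
    ring
  · by_cases hij2 : i = j
    · subst hij2
      rw [sum_diag w L (Tmat w L)
        (Tmat_diag w L) (fun i j h1 h2 => Tmat_unip w L h1 h2) hLdiag hLunip i]
      rw [Tmat_diag, map_one, mul_one, one_mul]
    · rw [sum_zero w L (Tmat w L)
        (Tmat_diag w L) (fun i j h1 h2 => Tmat_unip w L h1 h2) hLdiag hLunip hij2 (by omega)]
      rw [Tmat_unip w L hij2 (by omega), map_zero, mul_zero, zero_mul]

end Matrix

/-- Over the Witt vectors `W = 𝕎(k)` of a perfect field `k` of characteristic `p`,
given a block-unipotent matrix `L` (w.r.t. a weight function `w`) and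
`P = diag(p^{w(i)})`, there is a unique block-unipotent matrix `T` over `W` with
`P·σ(T) = T·L·P`; moreover `T_{ij} ∈ p^{w(j)-w(i)}·W` whenever `w(i) < w(j)`. -/
theorem stmt_5 (p : ℕ) [Fact p.Prime] (k : Type*) [Field k] [CharP k p]
    [PerfectRing k p]
    (N : ℕ) (hN : 1 ≤ N) (w : Fin N → ℕ)
    (L : Matrix (Fin N) (Fin N) (WittVector p k))
    (hLdiag : ∀ i, L i i = 1)
    (hLunip : ∀ i j, i ≠ j → w j ≤ w i → L i j = 0) :
    ∃ T : Matrix (Fin N) (Fin N) (WittVector p k),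
      ((∀ i, T i i = 1) ∧ (∀ i j, i ≠ j → w j ≤ w i → T i j = 0) ∧
        Matrix.diagonal (fun i => (p : WittVector p k) ^ (w i)) *
            T.map (WittVector.frobenius) =
          T * L * Matrix.diagonal (fun i => (p : WittVector p k) ^ (w i))) ∧
      (∀ i j, w i < w j → ∃ c : WittVector p k,
        T i j = (p : WittVector p k) ^ (w j - w i) * c) ∧
      (∀ T' : Matrix (Fin N) (Fin N) (WittVector p k),
        ((∀ i, T' i i = 1) ∧ (∀ i j, i ≠ j → w j ≤ w i → T' i j = 0) ∧
          Matrix.diagonal (fun i => (p : WittVector p k) ^ (w i)) *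
              T'.map (WittVector.frobenius) =
            T' * L * Matrix.diagonal (fun i => (p : WittVector p k) ^ (w i))) →
        T' = T) := by
  classical
  refine ⟨Matrix.of fun i j => Tmat w L i j, ⟨?_, ?_, ?_⟩, ?_, ?_⟩
  · exact fun i => Tmat_diag w L i
  · exact fun i j h1 h2 => Tmat_unip w L h1 h2
  · apply Matrix.ext
    intro i j
    rw [Matrix.diagonal_mul, Matrix.mul_diagonal, Matrix.map_apply, Matrix.mul_apply]
    simp only [Matrix.mul_apply, Matrix.of_apply]
    exact entry_eq w L hLdiag hLunip i j
  · exact fun i j h => (Tmat_spec w L h).1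
  · rintro T' ⟨h1, h2, h3⟩
    have hpne : (p : WittVector p k) ≠ 0 := WittVector.p_nonzero p k
    have key : ∀ n : ℕ, ∀ i j, w j - w i ≤ n → T' i j = Tmat w L i j := by
      intro n
      induction n with
      | zero =>
        intro i j hn
        by_cases hij : i = j
        · subst hij; rw [h1 i, Tmat_diag]
        · rw [h2 i j hij (by omega), Tmat_unip w L hij (by omega)]
      | succ n ih =>
        intro i j hn
        by_cases hij : w i < w j
        · have hentry : (p : WittVector p k) ^ (w i) * WittVector.frobenius (T' i j)
              = (∑ m, T' i m * L m j) * (p : WittVector p k) ^ (w j) := by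
            have := congrFun (congrFun h3 i) j
            rwa [Matrix.diagonal_mul, Matrix.mul_diagonal, Matrix.map_apply,
              Matrix.mul_apply] at this
          rw [sum_split w L T' h1 h2 hLdiag hLunip hij] at hentry
          have hsum : ∑ m ∈ (Finset.univ.filter fun m => w i < w m ∧ w m < w j),
              T' i m * L m j
              = ∑ m ∈ (Finset.univ.filter fun m => w i < w m ∧ w m < w j),
              Tmat w L i m * L m j := by
            apply Finset.sum_congr rfl
            intro m hm
            simp only [Finset.mem_filter] at hm
            rw [ih i m (by omega)]
          rw [hsum] at hentry
          have hw : (p : WittVector p k) ^ (w j)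
              = (p : WittVector p k) ^ (w i) * (p : WittVector p k) ^ (w j - w i) := by
            rw [← pow_add]; congr 1; omega
          have hentry2 : WittVector.frobenius (T' i j)
              = (p : WittVector p k) ^ (w j - w i) * T' i j
                + (p : WittVector p k) ^ (w j - w i) * Smat w L i j := by
            apply mul_left_cancel₀ (pow_ne_zero (w i) hpne)
            rw [hentry, hw, Smat]
            ring
          obtain ⟨_, hspec⟩ := Tmat_spec w L hij
          have hspec2 : WittVector.frobenius (Tmat w L i j)
              = (p : WittVector p k) ^ (w j - w i) * Tmat w L i j
                + (p : WittVector p k) ^ (w j - w i) * Smat w L i j := by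
            rw [hspec]; ring
          exact Stmt5Aux.sol_unique (by omega)
            ((p : WittVector p k) ^ (w j - w i) * Smat w L i j) hentry2 hspec2
        · by_cases hij2 : i = j
          · subst hij2; rw [h1 i, Tmat_diag]
          · rw [h2 i j hij2 (by omega), Tmat_unip w L hij2 (by omega)]
    apply Matrix.ext
    intro i j
    exact key (w j - w i) i j le_rfl
end

section
/- Let p be a prime and k an algebraically closed field of characteristic p, with ring of Witt vectors W = 𝕎(k) and Frobenius endomorphism σ : W → W. Then for every unit c ∈ W^× there exists a unit b ∈ W^× such that σ(b) = c·b, i.e. c = σ(b)·b^{−1}. -/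
/-- For `k` algebraically closed of characteristic `p` with Witt vectors
`W = 𝕎(k)` and Frobenius `σ`, every unit `c ∈ W^×` can be written as
`c = σ(b)·b^{-1}` for some unit `b ∈ W^×`. -/
theorem stmt_8 (p : ℕ) [Fact p.Prime] (k : Type*) [Field k] [IsAlgClosed k]
    [CharP k p] (c : (WittVector p k)ˣ) :
    ∃ b : (WittVector p k)ˣ,
      WittVector.frobenius (b : WittVector p k) = (c : WittVector p k) * (b : WittVector p k) := by
  have h1 : (1 : WittVector p k).coeff 0 ≠ 0 := by simp
  have hc : (c : WittVector p k).coeff 0 ≠ 0 := by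
    have := (WittVector.constantCoeff (p := p) (R := k)).isUnit_map c.isUnit
    simpa using this.ne_zero
  set b := WittVector.frobeniusRotation p h1 hc with hb
  have hb0 : b.coeff 0 ≠ 0 :=
    by simpa [hb, WittVector.frobeniusRotation, WittVector.frobeniusRotationCoeff] using
      WittVector.RecursionBase.solution_nonzero p h1 hc
  obtain ⟨u, hu⟩ := WittVector.isUnit_of_coeff_zero_ne_zero b hb0
  refine ⟨u, ?_⟩
  have key := WittVector.frobenius_frobeniusRotation p h1 hc
  rw [mul_one] at key
  rw [hu, key, mul_comm]
end

section
/- Let c : ℕ → ℚ be a sequence of rational numbers (indexed by n ≥ 1) and for each m ≥ 1 define C_m = (Σ_{d | m} c_d·d³)/m³, the m-th coefficient of the power series Z(q) = Σ_{n≥1} c_n·Li₃(q^n) ∈ ℚ[[q]], where Li₃(x) = Σ_{j≥1} x^j/j³ is the trilogarithm. Then the following are equivalent: (i) c_n is an integer for every n ≥ 1; (ii) for every prime p and every m ≥ 1, the rational number C_m − p^{−3}·C_{m/p} (with the convention that the term C_{m/p} is omitted, i.e. taken to be 0, when p does not divide m) has nonnegative p-adic valuation, i.e. lies in ℤ_{(p)}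 = {x ∈ ℚ : v_p(x) ≥ 0}. Equivalently, (ii) says that for every prime p all coefficients of the power series Z(q) − p^{−3}·Z(q^p) are p-integral. -/
/-- `q` is `p`-integral: it can be written `a / b` with `p ∤ b`. -/
def Pint (p : ℕ) (q : ℚ) : Prop := ∃ a b : ℤ, ¬ (p:ℤ) ∣ b ∧ q = (a : ℚ) / (b : ℚ)

variable {p : ℕ}

lemma not_pdvd_one (hp : p.Prime) : ¬ (p:ℤ) ∣ 1 := by
  rw [show (1:ℤ) = ((1:ℕ):ℤ) by norm_num, Int.natCast_dvd_natCast, Nat.dvd_one]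
  exact hp.ne_one

lemma Pint.zero (hp : p.Prime) : Pint p 0 := ⟨0, 1, not_pdvd_one hp, by simp⟩

lemma Pint.intCast (hp : p.Prime) (z : ℤ) : Pint p (z : ℚ) :=
  ⟨z, 1, not_pdvd_one hp, by simp⟩

lemma Pint.add (hp : p.Prime) {x y : ℚ} (hx : Pint p x) (hy : Pint p y) :
    Pint p (x + y) := by
  obtain ⟨a, b, hb, rfl⟩ := hx
  obtain ⟨a', b', hb', rfl⟩ := hy
  have hpI : Prime (p : ℤ) := Nat.prime_iff_prime_int.mp hp
  have hb0 : (b:ℚ) ≠ 0 := by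
    intro h; exact hb (by simp [show b = 0 by exact_mod_cast h])
  have hb'0 : (b':ℚ) ≠ 0 := by
    intro h; exact hb' (by simp [show b' = 0 by exact_mod_cast h])
  refine ⟨a * b' + b * a', b * b', ?_, ?_⟩
  · intro h
    rcases hpI.dvd_mul.mp h with h | h
    exacts [hb h, hb' h]
  · push_cast
    rw [div_add_div _ _ hb0 hb'0]

lemma Pint.neg (hp : p.Prime) {x : ℚ} (hx : Pint p x) : Pint p (-x) := by
  obtain ⟨a, b, hb, rfl⟩ := hx
  exact ⟨-a, b, hb, by push_cast; ring⟩

lemma Pint.sub (hp : p.Prime) {x y : ℚ} (hx : Pint p x) (hy : Pint p y) :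
    Pint p (x - y) := by
  rw [sub_eq_add_neg]; exact hx.add hp (hy.neg hp)

lemma Pint.sum (hp : p.Prime) {s : Finset ℕ} {f : ℕ → ℚ}
    (h : ∀ i ∈ s, Pint p (f i)) : Pint p (∑ i ∈ s, f i) :=
  Finset.sum_induction f _ (fun _ _ ha hb => ha.add hp hb) (Pint.zero hp) h

lemma Pint.not_dvd_den (hp : p.Prime) {q : ℚ} (h : Pint p q) : ¬ p ∣ q.den := by
  obtain ⟨a, b, hb, rfl⟩ := h
  intro hd
  apply hb
  have h1 : (((a:ℚ)/(b:ℚ)).den : ℤ) ∣ b := by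
    rw [← Rat.divInt_eq_div]; exact Rat.den_dvd a b
  exact dvd_trans (Int.natCast_dvd_natCast.mpr hd) h1

lemma pint_iff_nonneg (hp : p.Prime) (q : ℚ) :
    Pint p q ↔ 0 ≤ padicValRat p q := by
  haveI : Fact p.Prime := ⟨hp⟩
  constructor
  · rintro ⟨a, b, hb, rfl⟩
    by_cases ha : a = 0
    · simp [ha]
    have hb0 : b ≠ 0 := by rintro rfl; exact hb (dvd_zero _)
    have haQ : (a:ℚ) ≠ 0 := by exact_mod_cast ha
    have hbQ : (b:ℚ) ≠ 0 := by exact_mod_cast hb0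
    rw [padicValRat.div haQ hbQ, padicValRat.of_int, padicValRat.of_int,
      padicValInt.eq_zero_of_not_dvd hb]
    simp
  · intro h
    refine ⟨q.num, q.den, ?_, (Rat.num_div_den q).symm⟩
    intro hd
    have hdn : p ∣ q.den := by exact_mod_cast hd
    have h1 : 1 ≤ padicValNat p q.den := one_le_padicValNat_of_dvd q.pos.ne' hdn
    have h2 : padicValInt p q.num = 0 := by
      apply padicValInt.eq_zero_of_not_dvd
      intro hnum
      have : p ∣ q.num.natAbs := by
        rwa [Int.natCast_dvd] at hnum
      have := Nat.Coprime.eq_one_of_dvd (Nat.Coprime.coprime_dvd_left this q.reduced) hdn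
      exact hp.ne_one this
    rw [padicValRat_def, h2] at h
    omega

lemma pow_fact_dvd (hp : p.Prime) {d m : ℕ} (hm : m ≠ 0) (hdm : d ∣ m) (hpm : p ∣ m)
    (hnd : ¬ d ∣ m / p) : p ^ m.factorization p ∣ d := by
  by_contra h
  apply hnd
  have hd0 : d ≠ 0 := fun h0 => hm (Nat.eq_zero_of_zero_dvd (h0 ▸ hdm))
  have hple : p ≤ m := Nat.le_of_dvd (Nat.pos_of_ne_zero hm) hpm
  have hmp0 : m / p ≠ 0 := by
    have := Nat.div_pos hple hp.pos; omega
  rw [← Nat.factorization_le_iff_dvd hd0 hmp0]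
  rw [Nat.factorization_div hpm, hp.factorization]
  intro q
  simp only [Finsupp.tsub_apply, Finsupp.single_apply]
  have hdlem : d.factorization q ≤ m.factorization q :=
    (Nat.factorization_le_iff_dvd hd0 hm).mpr hdm q
  by_cases hq : p = q
  · subst hq
    have hlt : d.factorization p < m.factorization p := by
      by_contra hge
      exact h ((Nat.Prime.pow_dvd_iff_le_factorization hp hd0).mpr (by omega))
    simp only [if_pos rfl, eq_self_iff_true, if_true]
    omega
  · simp only [if_neg hq]
    omega

lemma term_pint (hp : p.Prime) {d m : ℕ} (hm : m ≠ 0) (hdm : d ∣ m)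
    (hpd : p ^ (m.factorization p) ∣ d) (z : ℤ) :
    Pint p ((z:ℚ) * (d:ℚ) ^ 3 / (m:ℚ) ^ 3) := by
  set a := m.factorization p with ha
  obtain ⟨d', hd'⟩ := hpd
  have hm' : m = p ^ a * (m / p ^ a) := (Nat.ordProj_mul_ordCompl_eq_self m p).symm
  set m' := m / p ^ a with hm'def
  have hpm' : ¬ p ∣ m' := Nat.not_dvd_ordCompl hp hm
  have hm'0 : m' ≠ 0 := by
    intro h0; rw [h0, mul_zero] at hm'; exact hm hm'
  refine ⟨z * (d':ℤ) ^ 3, (m':ℤ) ^ 3, ?_, ?_⟩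
  · intro h
    apply hpm'
    have : (p:ℤ) ∣ (m':ℤ) ^ 3 := h
    have : (p:ℤ) ∣ (m':ℤ) := (Nat.prime_iff_prime_int.mp hp).dvd_of_dvd_pow this
    exact_mod_cast this
  · have hx : ((p:ℚ) ^ a) ≠ 0 := pow_ne_zero _ (Nat.cast_ne_zero.mpr hp.pos.ne')
    have hm'Q : (m':ℚ) ≠ 0 := by exact_mod_cast hm'0
    have hdQ : (d:ℚ) = (p:ℚ) ^ a * (d':ℚ) := by exact_mod_cast congrArg (Nat.cast (R := ℚ)) hd'
    have hmQ : (m:ℚ) = (p:ℚ) ^ a * (m':ℚ) := by exact_mod_cast congrArg (Nat.cast (R := ℚ)) hm'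
    rw [hdQ, hmQ]
    push_cast
    field_simp

lemma zpow_neg3 (x : ℚ) : x ^ (-3 : ℤ) = (x ^ 3)⁻¹ := by
  rw [show (-3 : ℤ) = -((3 : ℕ) : ℤ) by norm_num, zpow_neg, zpow_natCast]

lemma sum_sdiff_identity (c : ℕ → ℚ) (C : ℕ → ℚ) (hp : p.Prime) {m : ℕ}
    (hm : 1 ≤ m) (hpm : p ∣ m)
    (hCm : C m = (∑ d ∈ m.divisors, c d * (d : ℚ) ^ 3) / (m : ℚ) ^ 3)
    (hCmp : C (m / p) = (∑ d ∈ (m / p).divisors, c d * (d : ℚ) ^ 3) / ((m / p : ℕ) : ℚ) ^ 3) :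
    C m - (p : ℚ) ^ (-3 : ℤ) * C (m / p) =
      (∑ d ∈ m.divisors \ (m / p).divisors, c d * (d : ℚ) ^ 3) / (m : ℚ) ^ 3 := by
  have hm0 : m ≠ 0 := by omega
  have hp0 : (p : ℚ) ≠ 0 := Nat.cast_ne_zero.mpr hp.pos.ne'
  have hmp0 : m / p ≠ 0 := by
    have := Nat.div_pos (Nat.le_of_dvd (Nat.pos_of_ne_zero hm0) hpm) hp.pos; omega
  have hq0 : ((m / p : ℕ) : ℚ) ≠ 0 := Nat.cast_ne_zero.mpr hmp0
  have hmQ : (m : ℚ) = (p : ℚ) * ((m / p : ℕ) : ℚ) := by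
    exact_mod_cast congrArg (Nat.cast (R := ℚ)) (Nat.mul_div_cancel' hpm).symm
  have hsub : (m / p).divisors ⊆ m.divisors :=
    Nat.divisors_subset_of_dvd hm0 (Nat.div_dvd_of_dvd hpm)
  have hsd : ∑ d ∈ m.divisors \ (m / p).divisors, c d * (d : ℚ) ^ 3 =
      (∑ d ∈ m.divisors, c d * (d : ℚ) ^ 3) - ∑ d ∈ (m / p).divisors, c d * (d : ℚ) ^ 3 :=
    Finset.sum_sdiff_eq_sub hsub
  rw [hCm, hCmp, hsd, zpow_neg3, hmQ]
  field_simp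

/-- For a sequence `c : ℕ → ℚ` (indexed by `n ≥ 1`) let
`C_m = (Σ_{d ∣ m} c_d·d³)/m³` be the `m`-th coefficient of
`Z(q) = Σ_{n≥1} c_n·Li₃(qⁿ)`.  Then all `c_n` are integers if and only if for
every prime `p` and every `m ≥ 1` the rational number
`C_m − p^{-3}·C_{m/p}` (the term `C_{m/p}` being omitted when `p ∤ m`) has
nonnegative `p`-adic valuation. -/
theorem stmt_9 (c : ℕ → ℚ) (C : ℕ → ℚ)
    (hC : ∀ m : ℕ, 1 ≤ m →
      C m = (∑ d ∈ m.divisors, c d * (d : ℚ) ^ 3) / (m : ℚ) ^ 3) :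
    (∀ n : ℕ, 1 ≤ n → ∃ z : ℤ, c n = (z : ℚ)) ↔
    (∀ p : ℕ, p.Prime → ∀ m : ℕ, 1 ≤ m →
      0 ≤ padicValRat p
        (C m - (if p ∣ m then (p : ℚ) ^ (-3 : ℤ) * C (m / p) else 0))) := by
  constructor
  · intro hint p hp m hm
    rw [← pint_iff_nonneg hp]
    have hm0 : m ≠ 0 := by omega
    by_cases hpm : p ∣ m
    · have hmp0 : m / p ≠ 0 := by
        have := Nat.div_pos (Nat.le_of_dvd (Nat.pos_of_ne_zero hm0) hpm) hp.pos; omega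
      rw [if_pos hpm,
        sum_sdiff_identity c C hp hm hpm (hC m hm) (hC (m / p) (Nat.one_le_iff_ne_zero.mpr hmp0)),
        Finset.sum_div]
      apply Pint.sum hp
      intro d hd
      rw [Finset.mem_sdiff, Nat.mem_divisors] at hd
      obtain ⟨⟨hdvd, -⟩, hnotmem⟩ := hd
      have hd1 : 1 ≤ d := Nat.pos_of_ne_zero fun h0 => hm0 (Nat.eq_zero_of_zero_dvd (h0 ▸ hdvd))
      obtain ⟨z, hz⟩ := hint d hd1
      rw [hz]
      have hnd' : ¬ d ∣ m / p := fun h => hnotmem (Nat.mem_divisors.mpr ⟨h, hmp0⟩)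
      exact term_pint hp hm0 hdvd (pow_fact_dvd hp hm0 hdvd hpm hnd') z
    · rw [if_neg hpm, sub_zero, hC m hm, Finset.sum_div]
      apply Pint.sum hp
      intro d hd
      rw [Nat.mem_divisors] at hd
      obtain ⟨hdvd, -⟩ := hd
      have hd1 : 1 ≤ d := Nat.pos_of_ne_zero fun h0 => hm0 (Nat.eq_zero_of_zero_dvd (h0 ▸ hdvd))
      obtain ⟨z, hz⟩ := hint d hd1
      rw [hz]
      have hfact : m.factorization p = 0 := Nat.factorization_eq_zero_of_not_dvd hpm
      exact term_pint hp hm0 hdvd (by simp [hfact]) z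
  · intro hval n
    induction n using Nat.strong_induction_on with
    | _ n ih =>
    intro hn
    have hn0 : n ≠ 0 := by omega
    have hn3 : (n : ℚ) ^ 3 ≠ 0 := pow_ne_zero _ (Nat.cast_ne_zero.mpr hn0)
    have key : ∀ p : ℕ, p.Prime → Pint p (c n) := by
      intro p hp
      have h2 : Pint p (C n - (if p ∣ n then (p : ℚ) ^ (-3 : ℤ) * C (n / p) else 0)) :=
        (pint_iff_nonneg hp _).mpr (hval p hp n hn)
      by_cases hpn : p ∣ n
      · rw [if_pos hpn] at h2
        have hnp0 : n / p ≠ 0 := by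
          have := Nat.div_pos (Nat.le_of_dvd (Nat.pos_of_ne_zero hn0) hpn) hp.pos; omega
        set T := n.divisors \ (n / p).divisors with hT
        have hnT : n ∈ T := by
          rw [hT, Finset.mem_sdiff]
          refine ⟨Nat.mem_divisors_self n hn0, ?_⟩
          rw [Nat.mem_divisors]
          rintro ⟨hdvd, -⟩
          have hlt : n / p < n := Nat.div_lt_self (Nat.pos_of_ne_zero hn0) hp.one_lt
          exact absurd (Nat.le_of_dvd (Nat.pos_of_ne_zero hnp0) hdvd) (by omega)
        have hid := sum_sdiff_identity c C hp hn hpn (hC n hn) (hC (n / p) (Nat.one_le_iff_ne_zero.mpr hnp0))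
        have hsplit : ∑ d ∈ T, c d * (d : ℚ) ^ 3 =
            (∑ d ∈ T.erase n, c d * (d : ℚ) ^ 3) + c n * (n : ℚ) ^ 3 :=
          (Finset.sum_erase_add T _ hnT).symm
        have hcn : c n = (C n - (p : ℚ) ^ (-3 : ℤ) * C (n / p)) -
            ∑ d ∈ T.erase n, c d * (d : ℚ) ^ 3 / (n : ℚ) ^ 3 := by
          rw [hid, hsplit, ← Finset.sum_div]
          field_simp
          ring
        rw [hcn]
        refine h2.sub hp (Pint.sum hp ?_)
        intro d hd
        have hdne := Finset.ne_of_mem_erase hd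
        have hdT := Finset.mem_of_mem_erase hd
        rw [hT, Finset.mem_sdiff, Nat.mem_divisors] at hdT
        obtain ⟨⟨hdvd, -⟩, hnotmem⟩ := hdT
        have hd1 : 1 ≤ d := Nat.pos_of_ne_zero fun h0 => hn0 (Nat.eq_zero_of_zero_dvd (h0 ▸ hdvd))
        have hdlt : d < n :=
          lt_of_le_of_ne (Nat.le_of_dvd (Nat.pos_of_ne_zero hn0) hdvd) hdne
        obtain ⟨z, hz⟩ := ih d hdlt hd1
        rw [hz]
        have hnd' : ¬ d ∣ n / p := fun h => hnotmem (Nat.mem_divisors.mpr ⟨h, hnp0⟩)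
        exact term_pint hp hn0 hdvd (pow_fact_dvd hp hn0 hdvd hpn hnd') z
      · rw [if_neg hpn, sub_zero] at h2
        have hnT : n ∈ n.divisors := Nat.mem_divisors_self n hn0
        have hsplit : ∑ d ∈ n.divisors, c d * (d : ℚ) ^ 3 =
            (∑ d ∈ n.divisors.erase n, c d * (d : ℚ) ^ 3) + c n * (n : ℚ) ^ 3 :=
          (Finset.sum_erase_add _ _ hnT).symm
        have hcn : c n = C n -
            ∑ d ∈ n.divisors.erase n, c d * (d : ℚ) ^ 3 / (n : ℚ) ^ 3 := by
          rw [hC n hn, hsplit, ← Finset.sum_div]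
          field_simp
          ring
        rw [hcn]
        refine h2.sub hp (Pint.sum hp ?_)
        intro d hd
        have hdne := Finset.ne_of_mem_erase hd
        have hdT := Finset.mem_of_mem_erase hd
        rw [Nat.mem_divisors] at hdT
        obtain ⟨hdvd, -⟩ := hdT
        have hd1 : 1 ≤ d := Nat.pos_of_ne_zero fun h0 => hn0 (Nat.eq_zero_of_zero_dvd (h0 ▸ hdvd))
        have hdlt : d < n :=
          lt_of_le_of_ne (Nat.le_of_dvd (Nat.pos_of_ne_zero hn0) hdvd) hdne
        obtain ⟨z, hz⟩ := ih d hdlt hd1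
        rw [hz]
        have hfact : n.factorization p = 0 := Nat.factorization_eq_zero_of_not_dvd hpn
        exact term_pint hp hn0 hdvd (by simp [hfact]) z
    have hden : (c n).den = 1 := by
      by_contra h
      obtain ⟨p, hp, hpd⟩ := Nat.exists_prime_and_dvd h
      exact (key p hp).not_dvd_den hp hpd
    exact ⟨(c n).num, ((Rat.den_eq_one_iff _).mp hden).symm⟩
end

section
/- Let R be a commutative ring and h ≥ 1. Let 𝒯 be the (2h+2)×(2h+2) block upper-triangular matrix over R with block sizes (1, h, h, 1): 𝒯 = [[1, τ01, τ02, τ03], [0, I_h, τ12, τ13], [0, 0, I_h, τ23], [0, 0, 0, 1]], where τ01 and τ02 are 1×h, τ03 is 1×1, τ12 is h×h, and τ13 and τ23 are h×1 matrices over R, and I_h is the h×h identity matrix. Let J be the block matrix [[0,0,0,−1],[0,0,I_h,0],[0,−I_h,0,0],[1,0,0,0]]. Then 𝒯^T·J·𝒯 = J if and only if the three relations τ01 = τ23^T, τ12 = τ12^T, and τ02 = τ23^T·τ12 − τ13^T hold; and these three relations hold if and only if τ12 = τ12^T and 𝒯 factors as 𝒯 = B·C, where B = [[1, τ23^T, 0,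 0],[0, I_h, 0, 0],[0, 0, I_h, τ23],[0, 0, 0, 1]], C = [[1, 0, −τ13^T, Z],[0, I_h, τ12, τ13],[0, 0, I_h, 0],[0, 0, 0, 1]], and Z = τ03 − τ23^T·τ13. -/
open Matrix

private lemma fromBlocks_eq_zero_iff {R : Type*} [CommRing R] {n m l o : Type*}
    {A : Matrix n l R} {B : Matrix n m R} {C : Matrix o l R} {D : Matrix o m R} :
    Matrix.fromBlocks A B C D = 0 ↔ A = 0 ∧ B = 0 ∧ C = 0 ∧ D = 0 := by
  rw [← Matrix.fromBlocks_zero, Matrix.fromBlocks_inj]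

/-- A `(2h+2)×(2h+2)` matrix built from 16 blocks of sizes `(1, h, h, 1)`. -/
def blk4 {R : Type*} [CommRing R] {h : ℕ}
    (M00 : Matrix Unit Unit R) (M01 : Matrix Unit (Fin h) R)
    (M02 : Matrix Unit (Fin h) R) (M03 : Matrix Unit Unit R)
    (M10 : Matrix (Fin h) Unit R) (M11 : Matrix (Fin h) (Fin h) R)
    (M12 : Matrix (Fin h) (Fin h) R) (M13 : Matrix (Fin h) Unit R)
    (M20 : Matrix (Fin h) Unit R) (M21 : Matrix (Fin h) (Fin h) R)
    (M22 : Matrix (Fin h) (Fin h) R) (M23 : Matrix (Fin h) Unit R)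
    (M30 : Matrix Unit Unit R) (M31 : Matrix Unit (Fin h) R)
    (M32 : Matrix Unit (Fin h) R) (M33 : Matrix Unit Unit R) :
    Matrix ((Unit ⊕ Fin h) ⊕ (Fin h ⊕ Unit)) ((Unit ⊕ Fin h) ⊕ (Fin h ⊕ Unit)) R :=
  Matrix.fromBlocks
    (Matrix.fromBlocks M00 M01 M10 M11) (Matrix.fromBlocks M02 M03 M12 M13)
    (Matrix.fromBlocks M20 M21 M30 M31) (Matrix.fromBlocks M22 M23 M32 M33)

/-- The symplectic Gramm-matrix relation `𝒯ᵀ·J·𝒯 = J` for the unipotent period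
matrix `𝒯` holds iff `τ01 = τ23ᵀ`, `τ12 = τ12ᵀ` and `τ02 = τ23ᵀ·τ12 − τ13ᵀ`;
and these relations hold iff `τ12 = τ12ᵀ` and `𝒯` factors as `𝒯 = B·C` with
`Z = τ03 − τ23ᵀ·τ13`. -/
theorem stmt_10 (R : Type*) [CommRing R] (h : ℕ) (hh : 1 ≤ h)
    (τ01 τ02 : Matrix Unit (Fin h) R) (τ03 : Matrix Unit Unit R)
    (τ12 : Matrix (Fin h) (Fin h) R) (τ13 τ23 : Matrix (Fin h) Unit R)
    (𝒯 J B C : Matrix ((Unit ⊕ Fin h) ⊕ (Fin h ⊕ Unit)) ((Unit ⊕ Fin h) ⊕ (Fin h ⊕ Unit)) R)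
    (h𝒯 : 𝒯 = blk4 1 τ01 τ02 τ03 0 1 τ12 τ13 0 0 1 τ23 0 0 0 1)
    (hJ : J = blk4 0 0 0 (-1) 0 0 1 0 0 (-1) 0 0 1 0 0 0)
    (hB : B = blk4 1 τ23ᵀ 0 0 0 1 0 0 0 0 1 τ23 0 0 0 1)
    (hC : C = blk4 1 0 (-τ13ᵀ) (τ03 - τ23ᵀ * τ13) 0 1 τ12 τ13 0 0 1 0 0 0 0 1) :
    (𝒯ᵀ * J * 𝒯 = J ↔ (τ01 = τ23ᵀ ∧ τ12 = τ12ᵀ ∧ τ02 = τ23ᵀ * τ12 - τ13ᵀ)) ∧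
    ((τ01 = τ23ᵀ ∧ τ12 = τ12ᵀ ∧ τ02 = τ23ᵀ * τ12 - τ13ᵀ) ↔
      (τ12 = τ12ᵀ ∧ 𝒯 = B * C)) := by
  subst h𝒯 hJ hB hC
  have h1 : ∀ M : Matrix Unit Unit R, Mᵀ = M := fun M => by ext ⟨⟩ ⟨⟩; rfl
  have h2 : τ13ᵀ * τ23 = τ23ᵀ * τ13 := by
    rw [← h1 (τ23ᵀ * τ13), transpose_mul, transpose_transpose]
  simp only [blk4, fromBlocks_transpose, fromBlocks_multiply, fromBlocks_inj,
    Matrix.mul_one, Matrix.one_mul, Matrix.mul_zero, Matrix.zero_mul,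
    add_zero, zero_add, Matrix.mul_neg, Matrix.neg_mul, transpose_zero, transpose_one,
    neg_zero, neg_neg, Matrix.fromBlocks_add, Matrix.fromBlocks_zero, sub_add_cancel,
    fromBlocks_eq_zero_iff, true_and, and_true]
  constructor
  · constructor
    · rintro ⟨-, e2, e3, -, e5, -⟩
      refine ⟨by rwa [add_neg_eq_zero] at e2, by rwa [neg_add_eq_zero] at e3, ?_⟩
      rw [← sub_eq_zero, ← e5]; abel
    · rintro ⟨r1, r2, r3⟩
      refine ⟨by simp [r1], by simp [r1], by rw [← r2]; simp, ?_, ?_, ?_⟩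
      · simp only [r3, transpose_sub, transpose_mul, transpose_transpose]; abel
      · rw [r3]; abel
      · rw [h2, h1]; abel
  · constructor
    · rintro ⟨r1, r2, r3⟩
      exact ⟨r2, r1, by rw [r3]; abel⟩
    · rintro ⟨r2, r1, r3⟩
      exact ⟨r1, r2, by rw [r3]; abel⟩
end

section
/- Let R be a commutative ring, δ : R → R a derivation over ℤ, applied entrywise to matrices over R, and h ≥ 1. Let 𝒯 be the (2h+2)×(2h+2) block matrix over R with block sizes (1, h, h, 1): 𝒯 = [[1, τ01, τ02, τ03], [0, I_h, τ12, τ13], [0, 0, I_h, τ23], [0, 0, 0, 1]], where τ01, τ02 are 1×h, τ03 is 1×1, τ12 is h×h, τ13, τ23 are h×1. Suppose δ(𝒯) = 𝒯·N, where N is the (2h+2)×(2h+2) block matrix whose only nonzero blocks are the superdiagonal blocks η01 (1×h), η12 (h×h), η23 (h×1). Suppose moreover the Riemann relations hold: τ01 = τ23^T, τ12 = τ12^T, and τ02 = τ23^T·τ12 − τ13^T. Then δ(τ13) = τ12·δ(τ23), and, setting Z = τ03 − τ23^T·τ13 (a 1×1 matrix), δ(Z) = −2·τ13^T·δ(τ23).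 -/
open Matrix

section aux
variable {R : Type*} [CommRing R] (δ : R → R)

lemma mapδ_mul {m n p : Type*} [Fintype n]
    (hδadd : ∀ a b : R, δ (a + b) = δ a + δ b)
    (hδmul : ∀ a b : R, δ (a * b) = a * δ b + b * δ a)
    (A : Matrix m n R) (B : Matrix n p R) :
    (A * B).map δ = A.map δ * B + A * B.map δ := by
  have hD : ∀ s : Finset n, ∀ f : n → R, δ (∑ k ∈ s, f k) = ∑ k ∈ s, δ (f k) := by
    intro s f
    have h0 : δ 0 = 0 := by
      have := hδadd 0 0; simpa using this.symm
    exact map_sum (AddMonoidHom.mk' δ hδadd) f s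
  ext i j
  simp only [Matrix.map_apply, Matrix.mul_apply, Matrix.add_apply, hD]
  rw [← Finset.sum_add_distrib]
  refine Finset.sum_congr rfl fun k _ => ?_
  rw [hδmul]; ring

lemma unit_symm (M : Matrix Unit Unit R) : Mᵀ = M := by
  ext i j; cases i; cases j; rfl

end aux





/-- If `δ(𝒯) = 𝒯·N` with `N` having only superdiagonal blocks `η01, η12, η23`,
and the Riemann relations `τ01 = τ23ᵀ`, `τ12 = τ12ᵀ`,
`τ02 = τ23ᵀ·τ12 − τ13ᵀ` hold, then `δ(τ13) = τ12·δ(τ23)` and, with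
`Z = τ03 − τ23ᵀ·τ13`, `δ(Z) = −2·τ13ᵀ·δ(τ23)`. -/
theorem stmt_11 (R : Type*) [CommRing R] (δ : R → R)
    (hδadd : ∀ a b : R, δ (a + b) = δ a + δ b)
    (hδmul : ∀ a b : R, δ (a * b) = a * δ b + b * δ a)
    (h : ℕ) (hh : 1 ≤ h)
    (τ01 τ02 : Matrix Unit (Fin h) R) (τ03 : Matrix Unit Unit R)
    (τ12 : Matrix (Fin h) (Fin h) R) (τ13 τ23 : Matrix (Fin h) Unit R)
    (η01 : Matrix Unit (Fin h) R) (η12 : Matrix (Fin h) (Fin h) R)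
    (η23 : Matrix (Fin h) Unit R)
    (𝒯 N : Matrix ((Unit ⊕ Fin h) ⊕ (Fin h ⊕ Unit)) ((Unit ⊕ Fin h) ⊕ (Fin h ⊕ Unit)) R)
    (h𝒯 : 𝒯 = blk4 1 τ01 τ02 τ03 0 1 τ12 τ13 0 0 1 τ23 0 0 0 1)
    (hN : N = blk4 0 η01 0 0 0 0 η12 0 0 0 0 η23 0 0 0 0)
    (hconn : 𝒯.map δ = 𝒯 * N)
    (hR1 : τ01 = τ23ᵀ) (hR2 : τ12 = τ12ᵀ) (hR3 : τ02 = τ23ᵀ * τ12 - τ13ᵀ)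
    (Z : Matrix Unit Unit R) (hZ : Z = τ03 - τ23ᵀ * τ13) :
    τ13.map δ = τ12 * (τ23.map δ) ∧
    Z.map δ = (-2 : R) • (τ13ᵀ * (τ23.map δ)) := by

  subst h𝒯 hN
  unfold blk4 at hconn
  simp only [Matrix.fromBlocks_map, Matrix.fromBlocks_multiply, Matrix.fromBlocks_add,
    Matrix.mul_zero, Matrix.zero_mul, Matrix.one_mul, Matrix.mul_one,
    add_zero, zero_add] at hconn
  have h01 := congrArg Matrix.toBlocks₁₁ hconn
  have h02' := congrArg Matrix.toBlocks₁₂ hconn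
  simp only [Matrix.toBlocks_fromBlocks₁₁, Matrix.toBlocks_fromBlocks₁₂] at h01 h02'
  have E13 : τ13.map δ = τ12 * η23 := by
    have := congrArg Matrix.toBlocks₂₂ h02'
    simpa only [Matrix.toBlocks_fromBlocks₂₂] using this
  have E23 : τ23.map δ = η23 := by
    have h22 := congrArg Matrix.toBlocks₂₂ hconn
    simp only [Matrix.toBlocks_fromBlocks₂₂] at h22
    have := congrArg Matrix.toBlocks₁₂ h22
    simpa only [Matrix.toBlocks_fromBlocks₁₂] using this
  have E03 : τ03.map δ = τ02 * η23 := by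
    have := congrArg Matrix.toBlocks₁₂ h02'
    simpa only [Matrix.toBlocks_fromBlocks₁₂] using this
  refine ⟨by rw [E13, E23], ?_⟩
  have hneg : ∀ a : R, δ (-a) = - δ a := by
    intro a
    have h0 : δ (0 : R) = 0 := by have := hδadd 0 0; simpa using this.symm
    have := hδadd a (-a); simp [h0] at this; linear_combination -this
  have hsub : (τ03 - τ23ᵀ * τ13).map δ = τ03.map δ - (τ23ᵀ * τ13).map δ := by
    ext i j
    simp [Matrix.map_apply, sub_eq_add_neg, hδadd, hneg]
  have hprod := mapδ_mul δ hδadd hδmul (τ23ᵀ) τ13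
  have htr : (τ23ᵀ).map δ = (τ23.map δ)ᵀ := rfl
  have hsym : η23ᵀ * τ13 = τ13ᵀ * η23 := by
    calc η23ᵀ * τ13 = (η23ᵀ * τ13)ᵀ := (unit_symm _ ).symm
    _ = τ13ᵀ * η23 := by simp [Matrix.transpose_mul]
  rw [hZ, hsub, E03, hprod, htr, E23, E13, hR3]
  rw [Matrix.sub_mul, Matrix.mul_assoc, hsym]
  ext i j
  simp only [Matrix.sub_apply, Matrix.add_apply, Matrix.smul_apply, smul_eq_mul]
  ring
end

section
/- Let R be a commutative ring and δ : R → R a derivation over ℤ, applied entrywise to matrices over R. Let T and S be invertible n×n matrices over R and let M, N, N' be n×n matrices over R such that δ(T) = T·N, δ(S) = S·N', and δ(M) = M·N' − N·M. Then δ(T·M·S^{−1}) = 0, i.e. every entry of T·M·S^{−1} is annihilated by δ. -/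
/-- If `δ` is a derivation of `R` (applied entrywise to matrices), `T` and `S`
are invertible `n×n` matrices and `M, N, N'` matrices over `R` with
`δ(T) = T·N`, `δ(S) = S·N'` and `δ(M) = M·N' − N·M`, then
`δ(T·M·S⁻¹) = 0`, i.e. every entry of `T·M·S⁻¹` is annihilated by `δ`. -/
theorem stmt_12 (R : Type*) [CommRing R] (δ : R → R)
    (hδadd : ∀ a b : R, δ (a + b) = δ a + δ b)
    (hδmul : ∀ a b : R, δ (a * b) = a * δ b + b * δ a)
    (n : ℕ) (T S M N N' : Matrix (Fin n) (Fin n) R)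
    (hT : IsUnit T.det) (hS : IsUnit S.det)
    (hδT : T.map δ = T * N) (hδS : S.map δ = S * N')
    (hδM : M.map δ = M * N' - N * M) :
    (T * M * S⁻¹).map δ = 0 := by
  have hδ0 : δ 0 = 0 := by
    have h := hδadd 0 0
    simp only [add_zero] at h
    exact (left_eq_add.mp h)
  have hδ1 : δ 1 = 0 := by
    have h := hδmul 1 1
    simp only [mul_one, one_mul] at h
    exact (left_eq_add.mp h)
  set φ : R →+ R := AddMonoidHom.mk' δ hδadd with hφ
  have hmul : ∀ A B : Matrix (Fin n) (Fin n) R,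
      (A * B).map δ = A.map δ * B + A * B.map δ := by
    intro A B
    ext i j
    simp only [Matrix.map_apply, Matrix.mul_apply, Matrix.add_apply]
    have : δ (∑ k, A i k * B k j) = ∑ k, δ (A i k * B k j) := map_sum φ _ _
    rw [this, ← Finset.sum_add_distrib]
    refine Finset.sum_congr rfl fun k _ => ?_
    rw [hδmul]
    ring
  have hSinv : S * S⁻¹ = 1 := Matrix.mul_nonsing_inv S hS
  have hSinv' : S⁻¹ * S = 1 := Matrix.nonsing_inv_mul S hS
  have hone : (1 : Matrix (Fin n) (Fin n) R).map δ = 0 := by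
    ext i j
    by_cases h : i = j <;>
      simp [Matrix.map_apply, Matrix.one_apply, h, hδ0, hδ1]
  have hδSinv : (S⁻¹).map δ = -(N' * S⁻¹) := by
    have h := hmul S S⁻¹
    rw [hSinv, hone, hδS] at h
    have h2 : S * (S⁻¹).map δ = -(S * N' * S⁻¹) := by
      have := h.symm
      rw [eq_comm, ← eq_neg_iff_add_eq_zero] at h
      linear_combination (norm := noncomm_ring) h
    have h3 : S⁻¹ * (S * (S⁻¹).map δ) = S⁻¹ * (-(S * N' * S⁻¹)) := by rw [h2]
    rw [← Matrix.mul_assoc, hSinv', Matrix.one_mul] at h3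
    rw [h3]
    rw [Matrix.mul_neg, ← Matrix.mul_assoc, ← Matrix.mul_assoc, hSinv',
      Matrix.one_mul]
  have hTM : (T * M).map δ = T * M * N' := by
    rw [hmul, hδT, hδM]
    noncomm_ring
  rw [hmul, hTM, hδSinv]
  noncomm_ring
end

section
/- Let p be a prime, R a commutative ring in which the image of p is invertible, φ : R → R a ring endomorphism (applied entrywise to matrices), and h ≥ 1. Let τ23 and τ13 be h×1 matrices, τ12 an h×h matrix, and Z a 1×1 matrix over R, and define the (2h+2)×(2h+2) matrix (block sizes (1, h, h, 1)) 𝒯 = B·C, where B = [[1, τ23^T, 0, 0],[0, I_h, 0, 0],[0, 0, I_h, τ23],[0, 0, 0, 1]] and C = [[1, 0, −τ13^T, Z],[0, I_h, τ12, τ13],[0, 0, I_h, 0],[0, 0, 0, 1]]. Let P = diag(1, p·I_h, p²·I_h, p³). Assume φ(τ23) = p·τ23 (entrywise). Then P·φ(𝒯) = 𝒯·U·P, where U = [[1, 0, τ13^T − p^{−2}·φ(τ13^T), p^{−3}·φ(Z) − Z],[0, I_h, p^{−1}·φ(τ12) − τ12, p^{−2}·φ(τ13) − τ13],[0, 0,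 I_h, 0],[0, 0, 0, 1]]. In particular, the entry of U·P (equivalently, of 𝒯^{−1}·P·φ(𝒯)) in row 0 and column 2h+1 equals φ(Z) − p³·Z. -/
open Matrix

/-- For the canonical lift of Frobenius (`φ(τ23) = p·τ23`) one has
`P·φ(𝒯) = 𝒯·U·P` with `U` as in Formula (eq:matcanfrob); in particular the
entry of `U·P` in row `0` and column `2h+1` equals `φ(Z) − p³·Z`. -/
theorem stmt_13 (p : ℕ) (hp : p.Prime) (R : Type*) [CommRing R]
    [Invertible (p : R)] (φ : R →+* R) (h : ℕ) (hh : 1 ≤ h)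
    (τ12 : Matrix (Fin h) (Fin h) R) (τ13 τ23 : Matrix (Fin h) Unit R)
    (Z : Matrix Unit Unit R)
    (𝒯 B C P U : Matrix ((Unit ⊕ Fin h) ⊕ (Fin h ⊕ Unit)) ((Unit ⊕ Fin h) ⊕ (Fin h ⊕ Unit)) R)
    (hB : B = blk4 1 τ23ᵀ 0 0 0 1 0 0 0 0 1 τ23 0 0 0 1)
    (hC : C = blk4 1 0 (-τ13ᵀ) Z 0 1 τ12 τ13 0 0 1 0 0 0 0 1)
    (h𝒯 : 𝒯 = B * C)
    (hP : P = blk4 1 0 0 0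
      0 ((p : R) • 1) 0 0
      0 0 ((p : R) ^ 2 • 1) 0
      0 0 0 ((p : R) ^ 3 • 1))
    (hU : U = blk4 1 0 (τ13ᵀ - (⅟(p : R)) ^ 2 • (τ13ᵀ.map φ))
        ((⅟(p : R)) ^ 3 • (Z.map φ) - Z)
      0 1 ((⅟(p : R)) • (τ12.map φ) - τ12) ((⅟(p : R)) ^ 2 • (τ13.map φ) - τ13)
      0 0 1 0
      0 0 0 1)
    (hτ23 : τ23.map φ = (p : R) • τ23) :
    P * (𝒯.map φ) = 𝒯 * U * P ∧
    (U * P) (Sum.inl (Sum.inl ())) (Sum.inr (Sum.inr ())) =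
      (Z.map φ) () () - (p : R) ^ 3 * Z () () := by
  have hmapneg : ∀ (m n : Type) (M : Matrix m n R), (-M).map φ = -(M.map φ) := by
    intro m n M; ext i j; simp [Matrix.map_apply]
  have hτ23T : (τ23ᵀ).map φ = (p : R) • τ23ᵀ := by
    rw [show (τ23ᵀ).map φ = (τ23.map φ)ᵀ from rfl, hτ23, Matrix.transpose_smul]
  have hpi : (p : R) * ⅟(p : R) = 1 := mul_invOf_self _
  subst hB hC h𝒯 hP hU
  constructor
  · unfold blk4
    simp only [Matrix.fromBlocks_multiply, Matrix.fromBlocks_map, Matrix.fromBlocks_inj,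
      Matrix.map_one φ (map_zero φ) (map_one φ), Matrix.map_zero _ (map_zero φ),
      Matrix.map_mul, Matrix.map_add _ (map_add φ), hmapneg, Matrix.fromBlocks_add,
      hτ23, hτ23T,
      Matrix.mul_one, Matrix.one_mul, Matrix.mul_zero, Matrix.zero_mul,
      Matrix.mul_sub, Matrix.sub_mul, Matrix.mul_smul, Matrix.smul_mul,
      add_zero, zero_add, neg_zero, smul_zero, smul_smul]
    repeat' apply And.intro
    all_goals try rfl
    all_goals try trivial
    all_goals match_scalars
    all_goals first
      | ring1
      | linear_combination hpi
      | linear_combination (-1 : R) * hpi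
      | linear_combination ((p : R) * ⅟(p : R) + 1) * hpi
      | linear_combination ((p : R) ^ 2 * ⅟(p : R) ^ 2 + (p : R) * ⅟(p : R) + 1) * hpi
      | linear_combination (p : R) * hpi
      | linear_combination ((p : R) * ((p : R) * ⅟(p : R) + 1)) * hpi
      | linear_combination (-((p : R) * ⅟(p : R) + 1)) * hpi
      | linear_combination (-((p : R) ^ 2 * ⅟(p : R) ^ 2 + (p : R) * ⅟(p : R) + 1)) * hpi
      | linear_combination (-(p : R)) * hpi
      | linear_combination (-((p : R) * ((p : R) * ⅟(p : R) + 1))) * hpi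
  · unfold blk4
    simp only [Matrix.fromBlocks_multiply,
      Matrix.mul_one, Matrix.one_mul, Matrix.mul_zero, Matrix.zero_mul,
      add_zero, zero_add]
    simp only [Matrix.add_apply, Matrix.fromBlocks_apply₁₂, Matrix.zero_apply,
      Matrix.mul_smul, Matrix.mul_one, Matrix.smul_apply, Matrix.sub_apply, smul_eq_mul,
      zero_add]
    linear_combination (((p : R) ^ 2 * ⅟(p : R) ^ 2 + (p : R) * ⅟(p : R) + 1) * Z.map φ () ()) * hpi
end

section
/- Let p be a prime, k an algebraically closed field of characteristic p, W = 𝕎(k) its ring of Witt vectors with Frobenius endomorphism σ, and A = W[[t_1, …, t_n]]. Let φ : A → A be the operator φ(Σ_d a_d t^d) = Σ_d σ(a_d) t^{p·d}. Suppose f ∈ A is an invertible power series, c ∈ W, and g ∈ A has constant coefficient 1, and that φ(f) = c·g·f. Then there exist a ∈ W and f̃ ∈ A with constant coefficient 1 such that f̃ = g·φ(f̃) and f·f̃ = a (a constant power series); in particular f = a·f̃^{−1} with f̃ invertible in A. -/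
open MvPowerSeries Finset

section helpers
variable {p n : ℕ} {R : Type*} [CommRing R]

lemma smul_inj_aux (hp : p ≠ 0) {u v : Fin n →₀ ℕ} (h : p • u = p • v) : u = v := by
  ext i
  have := DFunLike.congr_fun h i
  simp only [Finsupp.smul_apply, smul_eq_mul] at this
  exact Nat.eq_of_mul_eq_mul_left (Nat.pos_of_ne_zero hp) this

lemma phi_C (hp : p ≠ 0) (σ : R →+* R)
    (φ : MvPowerSeries (Fin n) R → MvPowerSeries (Fin n) R)
    (hφ : ∀ f d, coeff (R := R) (p • d) (φ f) = σ (coeff (R := R) d f))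
    (hφ0 : ∀ f d, (¬ ∃ e : Fin n →₀ ℕ, d = p • e) → coeff (R := R) d (φ f) = 0)
    (a : R) : φ (C (σ := Fin n) (R := R) a) = C (σ := Fin n) (R := R) (σ a) := by
  classical
  ext d
  by_cases hd : ∃ e : Fin n →₀ ℕ, d = p • e
  · obtain ⟨e, rfl⟩ := hd
    rw [hφ]
    by_cases he : e = 0
    · subst he; simp
    · have h1 : p • e ≠ 0 := fun h => he (by simpa using smul_inj_aux hp (v := 0) (by simpa using h))
      rw [coeff_C, coeff_C, if_neg he, if_neg h1, map_zero]
  · rw [hφ0 _ _ hd, coeff_C, if_neg (fun h => hd ⟨0, by simp [h]⟩)]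

lemma phi_mul (hp : p ≠ 0) (σ : R →+* R)
    (φ : MvPowerSeries (Fin n) R → MvPowerSeries (Fin n) R)
    (hφ : ∀ f d, coeff (R := R) (p • d) (φ f) = σ (coeff (R := R) d f))
    (hφ0 : ∀ f d, (¬ ∃ e : Fin n →₀ ℕ, d = p • e) → coeff (R := R) d (φ f) = 0)
    (x y : MvPowerSeries (Fin n) R) : φ (x * y) = φ x * φ y := by
  classical
  ext d
  by_cases hd : ∃ e : Fin n →₀ ℕ, d = p • e
  · obtain ⟨e, rfl⟩ := hd
    rw [hφ, coeff_mul, map_sum, coeff_mul]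
    have hsub : (Finset.HasAntidiagonal.antidiagonal e).image (fun q : (Fin n →₀ ℕ) × (Fin n →₀ ℕ) => (p • q.1, p • q.2)) ⊆ Finset.HasAntidiagonal.antidiagonal (p • e) := by
      intro q hq
      simp only [mem_image, Finset.HasAntidiagonal.mem_antidiagonal] at hq ⊢
      obtain ⟨r, hr, rfl⟩ := hq
      rw [← smul_add, hr]
    have hzero : ∀ q ∈ Finset.HasAntidiagonal.antidiagonal (p • e),
        q ∉ (Finset.HasAntidiagonal.antidiagonal e).image (fun q : (Fin n →₀ ℕ) × (Fin n →₀ ℕ) => (p • q.1, p • q.2)) →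
        coeff (R := R) q.1 (φ x) * coeff (R := R) q.2 (φ y) = 0 := by
      intro q hq hnq
      rw [Finset.HasAntidiagonal.mem_antidiagonal] at hq
      by_cases h1 : ∃ u : Fin n →₀ ℕ, q.1 = p • u
      · obtain ⟨u, hu⟩ := h1
        exfalso
        apply hnq
        have hle : ∀ i, u i ≤ e i := by
          intro i
          have := DFunLike.congr_fun hq i
          rw [Finsupp.add_apply, hu] at this
          simp only [Finsupp.smul_apply, smul_eq_mul] at this
          exact Nat.le_of_mul_le_mul_left (by omega) (Nat.pos_of_ne_zero hp)
        have hq2 : q.2 = p • (e - u) := by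
          ext i
          have := DFunLike.congr_fun hq i
          rw [Finsupp.add_apply, hu] at this
          simp only [Finsupp.smul_apply, smul_eq_mul, Finsupp.tsub_apply] at this ⊢
          have h4 := hle i
          have hmul : p * (e i - u i) + p * u i = p * e i := by
            rw [← Nat.mul_add]; congr 1; omega
          omega
        refine mem_image.mpr ⟨(u, e - u), ?_, ?_⟩
        · rw [Finset.HasAntidiagonal.mem_antidiagonal]
          ext i
          simp only [Finsupp.add_apply, Finsupp.tsub_apply]
          have := hle i
          omega
        · rw [← hu, ← hq2]
      · rw [hφ0 _ _ h1, zero_mul]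
    rw [← Finset.sum_subset hsub hzero, Finset.sum_image (fun a _ b _ h => ?_)]
    · apply Finset.sum_congr rfl
      intro q _
      rw [hφ, hφ, map_mul]
    · have h1 := smul_inj_aux hp (congrArg Prod.fst h)
      have h2 := smul_inj_aux hp (congrArg Prod.snd h)
      exact Prod.ext h1 h2
  · rw [hφ0 _ _ hd, coeff_mul]
    symm
    apply Finset.sum_eq_zero
    intro q hq
    rw [Finset.HasAntidiagonal.mem_antidiagonal] at hq
    by_cases h1 : ∃ u : Fin n →₀ ℕ, q.1 = p • u
    · by_cases h2 : ∃ v : Fin n →₀ ℕ, q.2 = p • v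
      · exfalso
        obtain ⟨u, hu⟩ := h1
        obtain ⟨v, hv⟩ := h2
        exact hd ⟨u + v, by rw [← hq, hu, hv, smul_add]⟩
      · rw [hφ0 _ _ h2, mul_zero]
    · rw [hφ0 _ _ h1, zero_mul]

end helpers


set_option maxHeartbeats 1000000 in
open MvPowerSeries in
/-- Over `A = W[[t_1,…,t_n]]`, `W = 𝕎(k)` with `k` algebraically closed of
characteristic `p`, let `φ` apply the Frobenius `σ` of `W` coefficientwise and
replace `t^d` by `t^{pd}`.  If `f ∈ A` is invertible, `c ∈ W`, `g ∈ A` has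
constant coefficient `1`, and `φ(f) = c·g·f`, then there are `a ∈ W` and
`f̃ ∈ A` with constant coefficient `1` such that `f̃ = g·φ(f̃)` and
`f·f̃ = a`; in particular `f = a·f̃⁻¹` with `f̃` invertible in `A`. -/
theorem stmt_16 (p : ℕ) [Fact p.Prime] (k : Type*) [Field k] [IsAlgClosed k]
    [CharP k p] (n : ℕ)
    (φ : MvPowerSeries (Fin n) (WittVector p k) → MvPowerSeries (Fin n) (WittVector p k))
    (hφ : ∀ (f : MvPowerSeries (Fin n) (WittVector p k)) (d : Fin n →₀ ℕ),
      coeff (R := WittVector p k) (p • d) (φ f) =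
        WittVector.frobenius (coeff (R := WittVector p k) d f))
    (hφ0 : ∀ (f : MvPowerSeries (Fin n) (WittVector p k)) (d : Fin n →₀ ℕ),
      (¬ ∃ e : Fin n →₀ ℕ, d = p • e) → coeff (R := WittVector p k) d (φ f) = 0)
    (f : MvPowerSeries (Fin n) (WittVector p k)) (hf : IsUnit f)
    (c : WittVector p k)
    (g : MvPowerSeries (Fin n) (WittVector p k))
    (hg : constantCoeff (σ := Fin n) (R := WittVector p k) g = 1)
    (hfrob : φ f = C (σ := Fin n) (R := WittVector p k) c * g * f) :
    ∃ (a : WittVector p k) (ftilde : MvPowerSeries (Fin n) (WittVector p k)),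
      constantCoeff (σ := Fin n) (R := WittVector p k) ftilde = 1 ∧
      ftilde = g * φ ftilde ∧
      f * ftilde = C (σ := Fin n) (R := WittVector p k) a ∧
      IsUnit ftilde := by
  classical
  have hp : p ≠ 0 := (Fact.out : p.Prime).ne_zero
  have hmul := phi_mul hp (WittVector.frobenius (p := p) (R := k)) φ hφ hφ0
  have hC := phi_C hp (WittVector.frobenius (p := p) (R := k)) φ hφ hφ0
  obtain ⟨u, hu⟩ := hf
  subst hu
  set a := constantCoeff (σ := Fin n) (R := WittVector p k) ↑u with ha
  have hinv : (↑u : MvPowerSeries (Fin n) (WittVector p k)) * ↑u⁻¹ = 1 := u.mul_inv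
  have hinv' : (↑u⁻¹ : MvPowerSeries (Fin n) (WittVector p k)) * ↑u = 1 := u.inv_mul
  have hcc : a * constantCoeff (σ := Fin n) (R := WittVector p k) ↑u⁻¹ = 1 := by
    have h := congrArg (constantCoeff (σ := Fin n) (R := WittVector p k)) hinv
    rw [map_mul, map_one] at h
    exact h
  have hσa : WittVector.frobenius a = c * a := by
    have h2 := congrArg (coeff (R := WittVector p k) (0 : Fin n →₀ ℕ)) hfrob
    rw [show (coeff (R := WittVector p k) (0 : Fin n →₀ ℕ)) (φ ↑u) =
        WittVector.frobenius ((coeff (R := WittVector p k) (0 : Fin n →₀ ℕ)) ↑u) from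
        by simpa using hφ ↑u 0] at h2
    simpa [coeff_zero_eq_constantCoeff_apply, map_mul, hg, ha] using h2
  have hφf1 : φ ↑u * φ ↑u⁻¹ = 1 := by
    rw [← hmul, hinv, show (1 : MvPowerSeries (Fin n) (WittVector p k)) =
      C (σ := Fin n) (R := WittVector p k) 1 from (map_one _).symm, hC, map_one]
  have hcomm : φ ↑u⁻¹ * φ ↑u = 1 := by rw [mul_comm]; exact hφf1
  refine ⟨a, C (σ := Fin n) (R := WittVector p k) a * ↑u⁻¹, ?_, ?_, ?_, ?_⟩
  · simp [map_mul, hcc]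
  · have R : g * (C (σ := Fin n) (R := WittVector p k) (WittVector.frobenius a) * φ ↑u⁻¹) * φ ↑u
        = g * C (σ := Fin n) (R := WittVector p k) (WittVector.frobenius a) := by
      calc g * (C (σ := Fin n) (R := WittVector p k) (WittVector.frobenius a) * φ ↑u⁻¹) * φ ↑u
          = g * C (σ := Fin n) (R := WittVector p k) (WittVector.frobenius a) * (φ ↑u⁻¹ * φ ↑u) := by
            ring
        _ = g * C (σ := Fin n) (R := WittVector p k) (WittVector.frobenius a) := by rw [hcomm, mul_one]
    have L : C (σ := Fin n) (R := WittVector p k) a * ↑u⁻¹ * (C (σ := Fin n) (R := WittVector p k) c * g * ↑u)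
        = g * C (σ := Fin n) (R := WittVector p k) (WittVector.frobenius a) := by
      rw [hσa]
      calc C (σ := Fin n) (R := WittVector p k) a * ↑u⁻¹ * (C (σ := Fin n) (R := WittVector p k) c * g * ↑u)
          = (C (σ := Fin n) (R := WittVector p k) a * C (σ := Fin n) (R := WittVector p k) c) * g *
            ((↑u⁻¹ : MvPowerSeries (Fin n) (WittVector p k)) * ↑u) := by ring
        _ = C (σ := Fin n) (R := WittVector p k) (c * a) * g * 1 := by
            rw [← map_mul, mul_comm a c, hinv']
        _ = g * C (σ := Fin n) (R := WittVector p k) (c * a) := by ring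
    have key : (C (σ := Fin n) (R := WittVector p k) a * ↑u⁻¹) * φ ↑u
        = (g * φ (C (σ := Fin n) (R := WittVector p k) a * ↑u⁻¹)) * φ ↑u := by
      rw [hmul, hC, R, hfrob, L]
    exact (IsUnit.of_mul_eq_one _ hφf1).mul_right_cancel key
  · calc (↑u : MvPowerSeries (Fin n) (WittVector p k)) * (C (σ := Fin n) (R := WittVector p k) a * ↑u⁻¹)
        = C (σ := Fin n) (R := WittVector p k) a * (↑u * ↑u⁻¹) := by ring
      _ = C (σ := Fin n) (R := WittVector p k) a := by rw [hinv, mul_one]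
  · exact ((IsUnit.of_mul_eq_one _ hcc).map (C (σ := Fin n) (R := WittVector p k))).mul
      (Units.isUnit u⁻¹)
end
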